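/- arXiv:1810.00794 — 7 statements merged into one kernel-verified Lean document; each statement's English description precedes it below -/
import Mathlib

section
/- Let E = EuclideanSpace ℝ (Fin 2), let C ⊆ E be a convex set, let P ⊆ E be a finite point set, and let a, b : Fin k → E be centers such that P ⊆ ⋃ i, (a i +ᵥ C) and P ⊆ ⋃ j, (b j +ᵥ C). Suppose the 2-colored intersection graph of the two families of translates — the simple graph on Fin k ⊕ Fin k in which Sum.inl i is adjacent to Sum.inr j exactly when (a i +ᵥ C) ∩ (b j +ᵥ C) is nonempty, and there are no other edges — is acyclic. Then there exist maps γ : Fin k → ℝ → E, continuous in the time variable on [0,1], with γ i 0 = a i for all i, and a permutation σ of Fin k with γ i 1 = b (σ i) for all i, such that for every t ∈ [0,1], P ⊆ ⋃ i, (γ i t +ᵥ C). (That is, the red translates can be continuously morphed onto the blue translates, without changing their shape or size, while covering P at all times.) -/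
open Metric Set Real Pointwise
open scoped Classical

noncomputable section

abbrev E : Type := EuclideanSpace ℝ (Fin 2)

noncomputable def pt (x y : ℝ) : E := WithLp.toLp 2 ![x, y]

/-- A continuous morph on `[0,1]` from configuration `(c0, r0)` to configuration `(c1, r1)`
of `k` balls, covering the point set `P` at all times. -/
def IsMorph {X : Type*} [PseudoMetricSpace X] (k : ℕ) (P : Set X)
    (c0 c1 : Fin k → X) (r0 r1 : Fin k → ℝ)
    (γ : Fin k → ℝ → X) (ρ : Fin k → ℝ → ℝ) : Prop :=
  (∀ i, ContinuousOn (γ i) (Set.Icc 0 1)) ∧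
  (∀ i, ContinuousOn (ρ i) (Set.Icc 0 1)) ∧
  (∀ i, ∀ t ∈ Set.Icc (0:ℝ) 1, 0 ≤ ρ i t) ∧
  (∀ i, γ i 0 = c0 i) ∧
  (∀ i, ρ i 0 = r0 i) ∧
  (∃ σ : Equiv.Perm (Fin k), (∀ i, γ i 1 = c1 (σ i)) ∧ (∀ i, ρ i 1 = r1 (σ i))) ∧
  (∀ t ∈ Set.Icc (0:ℝ) 1, P ⊆ ⋃ i, Metric.closedBall (γ i t) (ρ i t))


section AcyclicGraphLemmas

open SimpleGraph

variable {V : Type*} {G : SimpleGraph V}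

/-- A walk along a sequence of adjacent vertices. -/
def seqWalk (x : ℕ → V) (hadj : ∀ n, G.Adj (x n) (x (n+1))) (m : ℕ) : (d : ℕ) → G.Walk (x m) (x (m+d))
  | 0 => SimpleGraph.Walk.nil
  | d+1 => (seqWalk x hadj m d).concat (hadj (m+d))

lemma seqWalk_length (x : ℕ → V) (hadj : ∀ n, G.Adj (x n) (x (n+1))) (m d : ℕ) :
    (seqWalk x hadj m d).length = d := by
  induction d with
  | zero => rfl
  | succ d ih => simp [seqWalk, SimpleGraph.Walk.length_concat, ih]

lemma seqWalk_support (x : ℕ → V) (hadj : ∀ n, G.Adj (x n) (x (n+1))) (m d : ℕ) :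
    (seqWalk x hadj m d).support = (List.range (d+1)).map (fun i => x (m+i)) := by
  induction d with
  | zero => simp [seqWalk, List.range_succ]
  | succ d ih =>
      rw [seqWalk, SimpleGraph.Walk.support_concat, ih]
      simp [List.range_succ]

lemma seqWalk_isPath (hacyc : G.IsAcyclic) (x : ℕ → V) (hadj : ∀ n, G.Adj (x n) (x (n+1)))
    (hne : ∀ n, x (n+2) ≠ x n) : ∀ (d m : ℕ), (seqWalk x hadj m d).IsPath := by
  intro d
  induction d using Nat.strong_induction_on with
  | _ d ih =>
    intro m
    match d with
    | 0 => simp [seqWalk]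
    | Nat.succ d =>
      have hprev := ih d (Nat.lt_succ_self d) m
      rw [SimpleGraph.Walk.isPath_def, seqWalk, SimpleGraph.Walk.support_concat,
        List.nodup_append']
      refine ⟨hprev.support_nodup, List.nodup_singleton _, ?_⟩
      intro v hv hv'
      simp only [List.mem_singleton] at hv'
      subst hv'
      rw [seqWalk_support, List.mem_map] at hv
      obtain ⟨i, hi, heq⟩ := hv
      rw [List.mem_range] at hi
      -- heq : x (m+i) = x (m+d+1)
      rcases Nat.lt_or_ge i d with hid | hid
      · rcases Nat.lt_or_ge i (d-1) with hid2 | hid2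
        · -- i + 2 ≤ d : two distinct paths
          have e : m + i + (d - i) = m + d := by omega
          have hP1 : ((seqWalk x hadj (m+i) (d-i)).copy rfl (congrArg x e)).IsPath := by
            rw [SimpleGraph.Walk.isPath_copy]
            exact ih (d-i) (by omega) (m+i)
          have hadj2 : G.Adj (x (m+i)) (x (m+d)) := by
            have := hadj (m+d)
            rw [show m + d + 1 = m + (d+1) from by omega, ← heq] at this
            exact this.symm
          have := hacyc.path_unique ⟨_, hP1⟩ (SimpleGraph.Path.singleton hadj2)
          have hlen := congrArg (fun q : G.Path (x (m+i)) (x (m+d)) => q.val.length) this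
          simp [SimpleGraph.Walk.length_copy, seqWalk_length, SimpleGraph.Path.singleton] at hlen
          omega
        · -- i = d - 1
          have : i + 2 = d + 1 := by omega
          exact hne (m+i) (by rw [show m+i+2 = m+(d+1) from by omega]; exact heq.symm)
      · -- i = d
        have : i = d := by omega
        subst this
        exact (hadj (m+i)).ne heq

lemma exists_low_degree [Fintype V] (hacyc : G.IsAcyclic) (W : Finset V) (hW : W.Nonempty) :
    ∃ v ∈ W, (W.filter (fun w => G.Adj v w)).card ≤ 1 := by
  classical
  by_contra hcon
  push_neg at hcon
  have hdeg : ∀ prev cur, ∃ w, cur ∈ W → w ∈ W ∧ G.Adj cur w ∧ w ≠ prev := by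
    intro prev cur
    by_cases hcur : cur ∈ W
    · obtain ⟨w1, h1, w2, h2, hne⟩ := Finset.one_lt_card.mp (hcon cur hcur)
      rw [Finset.mem_filter] at h1 h2
      rcases eq_or_ne w1 prev with h | h
      · exact ⟨w2, fun _ => ⟨h2.1, h2.2, h ▸ hne.symm⟩⟩
      · exact ⟨w1, fun _ => ⟨h1.1, h1.2, h⟩⟩
    · exact ⟨cur, fun h => absurd h hcur⟩
  choose nxt hnxt using hdeg
  obtain ⟨v0, hv0⟩ := hW
  let y : ℕ → V × V := fun n => Nat.rec (v0, nxt v0 v0) (fun _ q => (q.2, nxt q.1 q.2)) n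
  have hQ : ∀ n, (y n).1 ∈ W ∧ (y n).2 ∈ W ∧ G.Adj (y n).1 (y n).2 := by
    intro n
    induction n with
    | zero =>
        obtain ⟨h1, h2, _⟩ := hnxt v0 v0 hv0
        exact ⟨hv0, h1, h2⟩
    | succ n ihn =>
        obtain ⟨_, h2, h3⟩ := ihn
        obtain ⟨g1, g2, _⟩ := hnxt (y n).1 (y n).2 h2
        exact ⟨h2, g1, g2⟩
  have hadj : ∀ n, G.Adj ((y n).1) ((y (n+1)).1) := fun n => (hQ n).2.2
  have hne : ∀ n, (y (n+2)).1 ≠ (y n).1 := fun n => (hnxt _ _ (hQ n).2.1).2.2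
  have hpath := seqWalk_isPath hacyc (fun n => (y n).1) hadj hne (Fintype.card V) 0
  have hlt := hpath.length_lt
  rw [seqWalk_length] at hlt
  omega

lemma forest_edge_bound [Fintype V] (hacyc : G.IsAcyclic) :
    ∀ (N : ℕ) (s t : Finset V), Disjoint s t → s.card + t.card ≤ N → (s ∪ t).Nonempty →
    ((s ×ˢ t).filter (fun q => G.Adj q.1 q.2)).card + 1 ≤ s.card + t.card := by
  intro N
  induction N with
  | zero =>
      intro s t hd hc hne
      obtain ⟨v, hv⟩ := hne
      have := Finset.card_eq_zero.mp (Nat.le_zero.mp (le_trans (Nat.le_add_right _ _) hc))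
      have := Finset.card_eq_zero.mp (Nat.le_zero.mp (le_trans (Nat.le_add_left _ _) hc))
      subst this; subst ‹s = ∅›
      simp at hv
  | succ N ihN =>
      intro s t hd hc hne
      obtain ⟨v, hvW, hvdeg⟩ := exists_low_degree hacyc (s ∪ t) hne
      rcases Finset.mem_union.mp hvW with hvs | hvt
      · have hsub : (s ×ˢ t).filter (fun q => G.Adj q.1 q.2) ⊆
            ((s.erase v) ×ˢ t).filter (fun q => G.Adj q.1 q.2) ∪
            ((t.filter (fun w => G.Adj v w)).image (fun w => (v, w))) := by
          intro q hq
          rw [Finset.mem_filter, Finset.mem_product] at hq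
          rcases eq_or_ne q.1 v with h | h
          · apply Finset.mem_union_right
            rw [Finset.mem_image]
            exact ⟨q.2, Finset.mem_filter.mpr ⟨hq.1.2, h ▸ hq.2⟩, by rw [← h]⟩
          · apply Finset.mem_union_left
            rw [Finset.mem_filter, Finset.mem_product]
            exact ⟨⟨Finset.mem_erase.mpr ⟨h, hq.1.1⟩, hq.1.2⟩, hq.2⟩
        have hc2 : ((t.filter (fun w => G.Adj v w)).image (fun w => (v, w))).card ≤ 1 :=
          le_trans Finset.card_image_le (le_trans (Finset.card_le_card
            (Finset.filter_subset_filter _ Finset.subset_union_right)) hvdeg)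
        have hsplit := le_trans (Finset.card_le_card hsub) (Finset.card_union_le _ _)
        have herase := Finset.card_erase_add_one hvs
        by_cases hne2 : (s.erase v ∪ t).Nonempty
        · have ih := ihN (s.erase v) t (hd.mono_left (Finset.erase_subset _ _))
            (by omega) hne2
          omega
        · have ht : t = ∅ := by
            rw [Finset.not_nonempty_iff_eq_empty, Finset.union_eq_empty] at hne2
            exact hne2.2
          subst ht
          have hcard1 : 1 ≤ s.card := Finset.card_pos.mpr ⟨v, hvs⟩
          simp only [Finset.product_empty, Finset.filter_empty, Finset.card_empty]
          omega
      · have hsub : (s ×ˢ t).filter (fun q => G.Adj q.1 q.2) ⊆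
            (s ×ˢ (t.erase v)).filter (fun q => G.Adj q.1 q.2) ∪
            ((s.filter (fun u => G.Adj u v)).image (fun u => (u, v))) := by
          intro q hq
          rw [Finset.mem_filter, Finset.mem_product] at hq
          rcases eq_or_ne q.2 v with h | h
          · apply Finset.mem_union_right
            rw [Finset.mem_image]
            exact ⟨q.1, Finset.mem_filter.mpr ⟨hq.1.1, h ▸ hq.2⟩, by rw [← h]⟩
          · apply Finset.mem_union_left
            rw [Finset.mem_filter, Finset.mem_product]
            exact ⟨⟨hq.1.1, Finset.mem_erase.mpr ⟨h, hq.1.2⟩⟩, hq.2⟩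
        have hc2 : ((s.filter (fun u => G.Adj u v)).image (fun u => (u, v))).card ≤ 1 := by
          refine le_trans Finset.card_image_le (le_trans (Finset.card_le_card ?_) hvdeg)
          intro u hu
          rw [Finset.mem_filter] at hu ⊢
          exact ⟨Finset.mem_union_left _ hu.1, hu.2.symm⟩
        have hsplit := le_trans (Finset.card_le_card hsub) (Finset.card_union_le _ _)
        have herase := Finset.card_erase_add_one hvt
        by_cases hne2 : (s ∪ t.erase v).Nonempty
        · have ih := ihN s (t.erase v) (hd.mono_right (Finset.erase_subset _ _))
            (by omega) hne2
          omega
        · have hs : s = ∅ := by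
            rw [Finset.not_nonempty_iff_eq_empty, Finset.union_eq_empty] at hne2
            exact hne2.1
          subst hs
          have hcard1 : 1 ≤ t.card := Finset.card_pos.mpr ⟨v, hvt⟩
          simp only [Finset.empty_product, Finset.filter_empty, Finset.card_empty]
          omega

lemma no_double_neighbors [Fintype V] (hacyc : G.IsAcyclic) (s t : Finset V)
    (hd : Disjoint s t) (hc : t.card ≤ s.card) (hs : s.Nonempty)
    (h2 : ∀ v ∈ s, ∃ w1 ∈ t, ∃ w2 ∈ t, w1 ≠ w2 ∧ G.Adj v w1 ∧ G.Adj v w2) : False := by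
  set e := (s ×ˢ t).filter (fun q => G.Adj q.1 q.2) with he
  have hfib : e.card = ∑ i ∈ s, (e.filter (fun q => q.1 = i)).card := by
    apply Finset.card_eq_sum_card_fiberwise
    intro q hq
    rw [Finset.mem_coe, Finset.mem_filter, Finset.mem_product] at hq
    exact Finset.mem_coe.mpr hq.1.1
  have hlow : ∀ i ∈ s, 2 ≤ (e.filter (fun q => q.1 = i)).card := by
    intro i hi
    obtain ⟨w1, hw1, w2, hw2, hne, ha1, ha2⟩ := h2 i hi
    refine Finset.one_lt_card.mpr ⟨(i, w1), ?_, (i, w2), ?_, ?_⟩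
    · rw [he, Finset.mem_filter, Finset.mem_filter, Finset.mem_product]
      exact ⟨⟨⟨hi, hw1⟩, ha1⟩, rfl⟩
    · rw [he, Finset.mem_filter, Finset.mem_filter, Finset.mem_product]
      exact ⟨⟨⟨hi, hw2⟩, ha2⟩, rfl⟩
    · simp [hne]
  have hlb : 2 * s.card ≤ e.card := by
    rw [hfib, two_mul]
    calc s.card + s.card = ∑ _i ∈ s, 2 := by rw [Finset.sum_const, smul_eq_mul]; ring
    _ ≤ ∑ i ∈ s, (e.filter (fun q => q.1 = i)).card := Finset.sum_le_sum hlow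
  have hub := forest_edge_bound hacyc (s.card + t.card) s t hd le_rfl
    (Finset.Nonempty.inl hs)
  rw [← he] at hub
  omega

lemma exists_schedule {k : ℕ} (G : SimpleGraph (Fin k ⊕ Fin k)) (hacyc : G.IsAcyclic)
    {α : Type*} (P : Set α) (R B : α → Set (Fin k))
    (hRB : ∀ p ∈ P, ∀ i ∈ R p, ∀ j ∈ B p, G.Adj (Sum.inl i) (Sum.inr j))
    (hB : ∀ p ∈ P, (B p).Nonempty) :
    ∀ (n : ℕ) (s t : Finset (Fin k)), s.card = n → t.card = n →
    ∃ L : List (Fin k × Fin k), L.length = n ∧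
      (L.map Prod.fst).Nodup ∧ (L.map Prod.fst).toFinset = s ∧
      (L.map Prod.snd).Nodup ∧ (L.map Prod.snd).toFinset = t ∧
      ∀ p ∈ P, (B p ⊆ ↑t) → ∀ (m : ℕ) (hm : m < L.length),
        (L.get ⟨m, hm⟩).1 ∈ R p → ∃ (l : ℕ) (hl : l < L.length), l ≤ m ∧ (L.get ⟨l, hl⟩).2 ∈ B p := by
  intro n
  induction n with
  | zero =>
      intro s t hs ht
      refine ⟨[], rfl, List.nodup_nil, ?_, List.nodup_nil, ?_, ?_⟩
      · simp [Finset.card_eq_zero.mp hs]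
      · simp [Finset.card_eq_zero.mp ht]
      · intro p _ _ m hm
        exact absurd hm (Nat.not_lt_zero m)
  | succ n ihn =>
      intro s t hs ht
      have hsne : s.Nonempty := Finset.card_pos.mp (by omega)
      have htne : t.Nonempty := Finset.card_pos.mp (by omega)
      -- key claim: a good first pair exists
      have hkey : ∃ i0 ∈ s, ∃ j0 ∈ t, ∀ p ∈ P, B p ⊆ ↑t → i0 ∈ R p → j0 ∈ B p := by
        by_contra hcon
        push_neg at hcon
        refine no_double_neighbors hacyc (s.image Sum.inl) (t.image Sum.inr) ?_ ?_
          (hsne.image _) ?_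
        · simp only [Finset.disjoint_left, Finset.mem_image]
          rintro v ⟨i, _, rfl⟩ ⟨j, _, h⟩
          exact Sum.inl_ne_inr h.symm
        · rw [Finset.card_image_of_injective _ Sum.inl_injective,
            Finset.card_image_of_injective _ Sum.inr_injective, hs, ht]
        · rintro v hv
          rw [Finset.mem_image] at hv
          obtain ⟨i, hi, rfl⟩ := hv
          obtain ⟨ja, hja⟩ := htne
          obtain ⟨p1, hp1, hBp1, hiR1, hnot1⟩ := hcon i hi ja hja
          obtain ⟨j1, hj1⟩ := hB p1 hp1
          have hj1t : j1 ∈ t := hBp1 hj1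
          obtain ⟨p2, hp2, hBp2, hiR2, hnot2⟩ := hcon i hi j1 hj1t
          obtain ⟨j2, hj2⟩ := hB p2 hp2
          have hj2t : j2 ∈ t := hBp2 hj2
          refine ⟨Sum.inr j1, Finset.mem_image_of_mem _ hj1t,
            Sum.inr j2, Finset.mem_image_of_mem _ hj2t, ?_, ?_, ?_⟩
          · intro h
            rw [Sum.inr.injEq] at h
            exact hnot2 (h ▸ hj2)
          · exact hRB p1 hp1 i hiR1 j1 hj1
          · exact hRB p2 hp2 i hiR2 j2 hj2
      obtain ⟨i0, hi0, j0, hj0, hgood⟩ := hkey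
      obtain ⟨L', hlen', hnf, htf, hns, hts, hguar⟩ := ihn (s.erase i0) (t.erase j0)
        (by rw [Finset.card_erase_of_mem hi0, hs]; rfl)
        (by rw [Finset.card_erase_of_mem hj0, ht]; rfl)
      refine ⟨(i0, j0) :: L', by simp [hlen'], ?_, ?_, ?_, ?_, ?_⟩
      · rw [List.map_cons, List.nodup_cons]
        refine ⟨?_, hnf⟩
        intro hmem
        have : i0 ∈ (List.map Prod.fst L').toFinset := List.mem_toFinset.mpr hmem
        rw [htf] at this
        exact (Finset.mem_erase.mp this).1 rfl
      · rw [List.map_cons, List.toFinset_cons, htf, Finset.insert_erase hi0]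
      · rw [List.map_cons, List.nodup_cons]
        refine ⟨?_, hns⟩
        intro hmem
        have : j0 ∈ (List.map Prod.snd L').toFinset := List.mem_toFinset.mpr hmem
        rw [hts] at this
        exact (Finset.mem_erase.mp this).1 rfl
      · rw [List.map_cons, List.toFinset_cons, hts, Finset.insert_erase hj0]
      · intro p hp hBt m hm hR
        match m with
        | 0 =>
            exact ⟨0, hm, le_refl 0, hgood p hp hBt hR⟩
        | Nat.succ m =>
            by_cases hj0B : j0 ∈ B p
            · exact ⟨0, by simp, Nat.zero_le _, hj0B⟩
            · have hBt' : B p ⊆ ↑(t.erase j0) := by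
                intro x hx
                rw [Finset.coe_erase]
                exact ⟨hBt hx, fun hxx => hj0B (hxx ▸ hx)⟩
              have hm' : m < L'.length := by
                simp only [List.length_cons] at hm
                omega
              obtain ⟨l, hl, hlm, hlB⟩ := hguar p hp hBt' m hm' hR
              exact ⟨l + 1, Nat.succ_lt_succ hl, by omega, hlB⟩

end AcyclicGraphLemmas


lemma mem_vadd_combination {C : Set E} (hC : Convex ℝ C) {p x y : E} (hx : p ∈ x +ᵥ C)
    (hy : p ∈ y +ᵥ C) {s : ℝ} (h0 : 0 ≤ s) (h1 : s ≤ 1) : p ∈ (x + s • (y - x)) +ᵥ C := by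
  obtain ⟨c1, hc1, e1⟩ := Set.mem_vadd_set.mp hx
  obtain ⟨c2, hc2, e2⟩ := Set.mem_vadd_set.mp hy
  rw [vadd_eq_add] at e1 e2
  rw [Set.mem_vadd_set]
  refine ⟨(1-s) • c1 + s • c2, hC hc1 hc2 (by linarith) h0 (by ring), ?_⟩
  rw [vadd_eq_add]
  have hc1' : c1 = p - x := by rw [← e1]; abel
  have hc2' : c2 = p - y := by rw [← e2]; abel
  subst hc1' hc2'
  module

theorem morph_translates_of_acyclic_intersection_graph
    (k : ℕ) (C : Set E) (hC : Convex ℝ C) (P : Set E) (hP : P.Finite)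
    (a b : Fin k → E)
    (ha : P ⊆ ⋃ i, a i +ᵥ C) (hb : P ⊆ ⋃ j, b j +ᵥ C)
    (G : SimpleGraph (Fin k ⊕ Fin k))
    (hG : ∀ u v, G.Adj u v ↔ ∃ i j,
        ((u = Sum.inl i ∧ v = Sum.inr j) ∨ (u = Sum.inr j ∧ v = Sum.inl i)) ∧
        ((a i +ᵥ C) ∩ (b j +ᵥ C)).Nonempty)
    (hacyc : G.IsAcyclic) :
    ∃ (γ : Fin k → ℝ → E) (σ : Equiv.Perm (Fin k)),
      (∀ i, ContinuousOn (γ i) (Set.Icc 0 1)) ∧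
      (∀ i, γ i 0 = a i) ∧
      (∀ i, γ i 1 = b (σ i)) ∧
      (∀ t ∈ Set.Icc (0:ℝ) 1, P ⊆ ⋃ i, γ i t +ᵥ C) := by
  classical
  set R : E → Set (Fin k) := fun p => {i | p ∈ a i +ᵥ C} with hRdef
  set B : E → Set (Fin k) := fun p => {j | p ∈ b j +ᵥ C} with hBdef
  have hRB : ∀ p ∈ P, ∀ i ∈ R p, ∀ j ∈ B p, G.Adj (Sum.inl i) (Sum.inr j) := by
    intro p hp i hi j hj
    rw [hG]
    exact ⟨i, j, Or.inl ⟨rfl, rfl⟩, ⟨p, hi, hj⟩⟩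
  have hBne : ∀ p ∈ P, (B p).Nonempty := by
    intro p hp
    obtain ⟨j, hj⟩ := Set.mem_iUnion.mp (hb hp)
    exact ⟨j, hj⟩
  obtain ⟨L, hlen, hnf, htf, hns, hts, hguar⟩ := exists_schedule G hacyc P R B hRB hBne k
    Finset.univ Finset.univ (by simp) (by simp)
  have hlenk : ∀ m : Fin k, (m : ℕ) < L.length := fun m => by rw [hlen]; exact m.isLt
  set f : Fin k → Fin k := fun m => (L.get ⟨m, hlenk m⟩).1 with hfdef
  set g : Fin k → Fin k := fun m => (L.get ⟨m, hlenk m⟩).2 with hgdef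
  have hmaplen : (L.map Prod.fst).length = k := by simp [hlen]
  have hmaplen' : (L.map Prod.snd).length = k := by simp [hlen]
  have hfinj : Function.Injective f := by
    intro m1 m2 hmm
    have h12 : (L.map Prod.fst).get ⟨(m1 : ℕ), by omega⟩ = (L.map Prod.fst).get ⟨(m2 : ℕ), by omega⟩ := by
      rw [List.get_eq_getElem, List.get_eq_getElem, List.getElem_map, List.getElem_map]
      exact hmm
    have := (List.Nodup.get_inj_iff hnf).mp h12
    rw [Fin.mk.injEq] at this
    exact Fin.ext this
  have hginj : Function.Injective g := by
    intro m1 m2 hmm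
    have h12 : (L.map Prod.snd).get ⟨(m1 : ℕ), by omega⟩ = (L.map Prod.snd).get ⟨(m2 : ℕ), by omega⟩ := by
      rw [List.get_eq_getElem, List.get_eq_getElem, List.getElem_map, List.getElem_map]
      exact hmm
    have := (List.Nodup.get_inj_iff hns).mp h12
    rw [Fin.mk.injEq] at this
    exact Fin.ext this
  set fE : Equiv.Perm (Fin k) := Equiv.ofBijective f (Finite.injective_iff_bijective.mp hfinj) with hfE
  set gE : Equiv.Perm (Fin k) := Equiv.ofBijective g (Finite.injective_iff_bijective.mp hginj) with hgE
  set σ : Equiv.Perm (Fin k) := fE.symm.trans gE with hσdef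
  set rank : Fin k → Fin k := fun i => fE.symm i with hrank
  have hfE_apply : ∀ m, fE m = f m := fun m => rfl
  have hgE_apply : ∀ m, gE m = g m := fun m => rfl
  have hrank_f : ∀ m, rank (f m) = m := fun m => fE.symm_apply_apply m
  have hσ_f : ∀ m, σ (f m) = g m := by
    intro m
    rw [hσdef]
    show gE (fE.symm (fE m)) = g m
    rw [Equiv.symm_apply_apply]
    exact hgE_apply m
  have hstar : ∀ p ∈ P, ∃ i', σ i' ∈ B p ∧ ∀ i ∈ R p, ((rank i' : Fin k) : ℕ) ≤ ((rank i : Fin k) : ℕ) := by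
    intro p hp
    obtain ⟨i00, hi00⟩ := Set.mem_iUnion.mp (ha hp)
    have hfilne : (Finset.univ.filter (fun i => i ∈ R p)).Nonempty :=
      ⟨i00, by simp; exact hi00⟩
    obtain ⟨imin, himin, hmin⟩ := Finset.exists_min_image _ (fun i => ((rank i : Fin k) : ℕ)) hfilne
    rw [Finset.mem_filter] at himin
    have hmem : (L.get ⟨((rank imin : Fin k) : ℕ), hlenk _⟩).1 ∈ R p := by
      have hfr : f (rank imin) = imin := by
        rw [hrank, ← hfE_apply, Equiv.apply_symm_apply]
      rw [hfdef] at hfr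
      simp only at hfr
      rw [hfr]
      exact himin.2
    obtain ⟨l, hl, hlm, hlB⟩ := hguar p hp (by intro x _; simp) ((rank imin : Fin k) : ℕ)
      (hlenk _) hmem
    have hlk : l < k := by omega
    refine ⟨f ⟨l, hlk⟩, ?_, ?_⟩
    · rw [hσ_f]
      exact hlB
    · intro i hi
      rw [hrank_f]
      have h1 : ((⟨l, hlk⟩ : Fin k) : ℕ) = l := rfl
      rw [h1]
      exact le_trans hlm (hmin i (Finset.mem_filter.mpr ⟨Finset.mem_univ i, hi⟩))
  set γ : Fin k → ℝ → E := fun i t =>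
    a i + min 1 (max 0 ((k:ℝ) * t - ((rank i : Fin k) : ℕ))) • (b (σ i) - a i) with hγdef
  refine ⟨γ, σ, ?_, ?_, ?_, ?_⟩
  · intro i
    apply Continuous.continuousOn
    apply Continuous.add continuous_const
    apply Continuous.fun_smul _ continuous_const
    exact continuous_const.min ((continuous_const.max
      ((continuous_const.mul continuous_id).sub continuous_const)))
  · intro i
    have h0 : min 1 (max 0 ((k:ℝ) * 0 - ((rank i : Fin k) : ℕ))) = 0 := by
      rw [mul_zero, zero_sub, max_eq_left (neg_nonpos.mpr (Nat.cast_nonneg _)),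
        min_eq_right zero_le_one]
    rw [hγdef]
    simp only
    rw [h0, zero_smul, add_zero]
  · intro i
    have hle : (1:ℝ) ≤ (k:ℝ) * 1 - ((rank i : Fin k) : ℕ) := by
      have := (rank i).isLt
      rw [mul_one]
      have : ((rank i : Fin k) : ℕ) + 1 ≤ k := (rank i).isLt
      calc (1:ℝ) = (((rank i : Fin k) : ℕ) + 1 : ℕ) - ((rank i : Fin k) : ℕ) := by push_cast; ring
      _ ≤ (k:ℝ) - ((rank i : Fin k) : ℕ) := by
            apply sub_le_sub_right
            exact_mod_cast this
    have h1 : min 1 (max 0 ((k:ℝ) * 1 - ((rank i : Fin k) : ℕ))) = 1 := by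
      rw [max_eq_right (le_trans zero_le_one hle), min_eq_left hle]
    rw [hγdef]
    simp only
    rw [h1, one_smul]
    abel
  · intro t ht p hp
    obtain ⟨i', hσB, hminr⟩ := hstar p hp
    set m' : ℕ := ((rank i' : Fin k) : ℕ) with hm'
    by_cases hcase : i' ∈ R p
    · refine Set.mem_iUnion.mpr ⟨i', ?_⟩
      rw [hγdef]
      simp only
      apply mem_vadd_combination hC hcase hσB
      · exact le_min zero_le_one (le_max_left _ _)
      · exact min_le_left _ _
    · by_cases h2 : (m' : ℝ) + 1 ≤ (k:ℝ) * t
      · refine Set.mem_iUnion.mpr ⟨i', ?_⟩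
        have h1 : min 1 (max 0 ((k:ℝ) * t - (m' : ℝ))) = 1 := by
          rw [max_eq_right (by linarith), min_eq_left (by linarith)]
        rw [hγdef]
        simp only
        rw [← hm', h1, one_smul]
        have : a i' + (b (σ i') - a i') = b (σ i') := by abel
        rw [this]
        exact hσB
      · obtain ⟨i, hi⟩ := Set.mem_iUnion.mp (ha hp)
        refine Set.mem_iUnion.mpr ⟨i, ?_⟩
        have hine : i ≠ i' := fun h => hcase (h ▸ hi)
        have hrne : ((rank i : Fin k) : ℕ) ≠ m' := by
          rw [hm']
          intro h
          exact hine (fE.symm.injective (Fin.ext h))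
        have hge : m' ≤ ((rank i : Fin k) : ℕ) := hminr i hi
        have hgt : (m' : ℝ) + 1 ≤ ((rank i : Fin k) : ℕ) := by
          have : m' + 1 ≤ ((rank i : Fin k) : ℕ) := by omega
          exact_mod_cast this
        have h0 : min 1 (max 0 ((k:ℝ) * t - ((rank i : Fin k) : ℕ))) = 0 := by
          rw [max_eq_left (by linarith), min_eq_right zero_le_one]
        rw [hγdef]
        simp only
        rw [h0, zero_smul, add_zero]
        exact hi
end
end

section
/- Let p_a, p_b, p_c, p_d be four points in the Euclidean plane such that the four cyclically consecutive distances satisfy dist(p_a, p_b) ≤ 2, dist(p_b, p_c) ≤ 2, dist(p_c, p_d) ≤ 2, and dist(p_d, p_a) ≤ 2. Then min(dist(p_a, p_c), dist(p_b, p_d)) ≤ 2√2. -/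
open Metric

theorem diagonal_of_four_cycle_short
    (pa pb pc pd : E)
    (hab : dist pa pb ≤ 2) (hbc : dist pb pc ≤ 2)
    (hcd : dist pc pd ≤ 2) (hda : dist pd pa ≤ 2) :
    min (dist pa pc) (dist pb pd) ≤ 2 * Real.sqrt 2 := by
  set u : E := pa - pb with hu
  set v : E := pb - pc with hv
  set w : E := pc - pd with hw
  have huv : pa - pc = u + v := by rw [hu, hv]; abel
  have hvw : pb - pd = v + w := by rw [hv, hw]; abel
  have huvw : pa - pd = u + v + w := by rw [hu, hv, hw]; abel
  have e1 : ‖u + v‖ ^ 2 = ‖u‖ ^ 2 + 2 * inner ℝ u v + ‖v‖ ^ 2 := norm_add_sq_real u v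
  have e2 : ‖v + w‖ ^ 2 = ‖v‖ ^ 2 + 2 * inner ℝ v w + ‖w‖ ^ 2 := norm_add_sq_real v w
  have e3 : ‖u + w‖ ^ 2 = ‖u‖ ^ 2 + 2 * inner ℝ u w + ‖w‖ ^ 2 := norm_add_sq_real u w
  have e4 : ‖u + v + w‖ ^ 2 = ‖u + v‖ ^ 2 + 2 * inner ℝ (u + v) w + ‖w‖ ^ 2 :=
    norm_add_sq_real (u + v) w
  have e5 : inner ℝ (u + v) w = inner ℝ u w + inner ℝ v w := inner_add_left u v w
  have key : ‖u + v‖ ^ 2 + ‖v + w‖ ^ 2 ≤ ‖u‖ ^ 2 + ‖v‖ ^ 2 + ‖w‖ ^ 2 + ‖u + v + w‖ ^ 2 := by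
    nlinarith [sq_nonneg ‖u + w‖]
  have hnorms : ‖u‖ ≤ 2 ∧ ‖v‖ ≤ 2 ∧ ‖w‖ ≤ 2 ∧ ‖u + v + w‖ ≤ 2 := by
    rw [hu, hv, hw, ← huvw]
    refine ⟨?_, ?_, ?_, ?_⟩ <;> rw [← dist_eq_norm]
    · exact hab
    · exact hbc
    · exact hcd
    · rw [dist_comm]; exact hda
  obtain ⟨h1, h2, h3, h4⟩ := hnorms
  have hsq : (min (dist pa pc) (dist pb pd)) ^ 2 ≤ 8 := by
    have d1 : dist pa pc = ‖u + v‖ := by rw [dist_eq_norm, huv]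
    have d2 : dist pb pd = ‖v + w‖ := by rw [dist_eq_norm, hvw]
    have hmin1 : min (dist pa pc) (dist pb pd) ≤ ‖u + v‖ := d1 ▸ min_le_left _ _
    have hmin2 : min (dist pa pc) (dist pb pd) ≤ ‖v + w‖ := d2 ▸ min_le_right _ _
    have hmn : 0 ≤ min (dist pa pc) (dist pb pd) := le_min dist_nonneg dist_nonneg
    have q1 : min (dist pa pc) (dist pb pd) ^ 2 ≤ ‖u + v‖ ^ 2 := pow_le_pow_left₀ hmn hmin1 2
    have q2 : min (dist pa pc) (dist pb pd) ^ 2 ≤ ‖v + w‖ ^ 2 := pow_le_pow_left₀ hmn hmin2 2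
    have b1 : ‖u‖ ^ 2 ≤ 4 := by
      have := pow_le_pow_left₀ (norm_nonneg u) h1 2; linarith
    have b2 : ‖v‖ ^ 2 ≤ 4 := by
      have := pow_le_pow_left₀ (norm_nonneg v) h2 2; linarith
    have b3 : ‖w‖ ^ 2 ≤ 4 := by
      have := pow_le_pow_left₀ (norm_nonneg w) h3 2; linarith
    have b4 : ‖u + v + w‖ ^ 2 ≤ 4 := by
      have := pow_le_pow_left₀ (norm_nonneg (u + v + w)) h4 2; linarith
    linarith
  have h8 : (2 * Real.sqrt 2) ^ 2 = 8 := by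
    rw [mul_pow, Real.sq_sqrt (by norm_num : (2:ℝ) ≥ 0)]; norm_num
  have hmn : 0 ≤ min (dist pa pc) (dist pb pd) := le_min dist_nonneg dist_nonneg
  calc min (dist pa pc) (dist pb pd) = Real.sqrt ((min (dist pa pc) (dist pb pd)) ^ 2) :=
        (Real.sqrt_sq hmn).symm
    _ ≤ Real.sqrt 8 := Real.sqrt_le_sqrt hsq
    _ = 2 * Real.sqrt 2 := by
        rw [← h8, Real.sqrt_sq (by positivity)]
end

section
/- Let x, y, z be three points in the Euclidean plane with dist(x, y) ≤ 2, dist(y, z) ≤ 2, and dist(x, z) ≤ 2√2. Then there exists a point m in the plane such that x, y, z all lie in the closed disk of radius √2 centered at m. -/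
open Metric

theorem triple_covered_by_sqrt_two_disk
    (x y z : E) (hxy : dist x y ≤ 2) (hyz : dist y z ≤ 2)
    (hxz : dist x z ≤ 2 * Real.sqrt 2) :
    ∃ m : E, x ∈ Metric.closedBall m (Real.sqrt 2) ∧
      y ∈ Metric.closedBall m (Real.sqrt 2) ∧
      z ∈ Metric.closedBall m (Real.sqrt 2) := by
  have h2 : (0:ℝ) ≤ Real.sqrt 2 := Real.sqrt_nonneg 2
  set p : E := (1/2 : ℝ) • (x + z) with hp
  set u : E := (1/2 : ℝ) • (x - z) with hu
  set v : E := y - p with hv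
  have hd : ‖u‖ ≤ Real.sqrt 2 := by
    have : ‖u‖ = dist x z / 2 := by
      rw [hu, norm_smul, dist_eq_norm]
      simp
      ring
    rw [this]; linarith
  have hsum : ‖u‖^2 + ‖v‖^2 ≤ 4 := by
    have e1 : y - x = v - u := by rw [hv, hu, hp]; module
    have e2 : y - z = v + u := by rw [hv, hu, hp]; module
    have par : ‖v - u‖^2 + ‖v + u‖^2 = 2 * (‖v‖^2 + ‖u‖^2) := by
      rw [norm_sub_sq_real, norm_add_sq_real]; ring
    have ha : ‖v - u‖ ≤ 2 := by
      rw [← e1, ← dist_eq_norm, dist_comm]; exact hxy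
    have hb : ‖v + u‖ ≤ 2 := by
      rw [← e2, ← dist_eq_norm]; exact hyz
    nlinarith [norm_nonneg (v - u), norm_nonneg (v + u)]
  have hs2 : Real.sqrt 2 ^ 2 = 2 := Real.sq_sqrt (by norm_num)
  have hdh : ‖u‖ + ‖v‖ ≤ 2 * Real.sqrt 2 := by
    nlinarith [norm_nonneg u, norm_nonneg v, sq_nonneg (‖u‖ - ‖v‖),
      sq_nonneg (‖u‖ + ‖v‖ - 2 * Real.sqrt 2)]
  by_cases hcase : ‖v‖ ≤ Real.sqrt 2
  · refine ⟨p, ?_, ?_, ?_⟩ <;> rw [mem_closedBall, dist_eq_norm]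
    · have e : x - p = u := by rw [hu, hp]; module
      rw [e]; exact hd
    · exact hcase
    · have e : z - p = -u := by rw [hu, hp]; module
      rw [e, norm_neg]; exact hd
  · push_neg at hcase
    have hv0 : (0:ℝ) < ‖v‖ := lt_of_le_of_lt h2 hcase
    set t : ℝ := 1 - Real.sqrt 2 / ‖v‖ with ht
    have ht0 : 0 ≤ t := by
      have : Real.sqrt 2 / ‖v‖ < 1 := (div_lt_one hv0).mpr hcase
      rw [ht]; linarith
    have htv : t * ‖v‖ = ‖v‖ - Real.sqrt 2 := by
      rw [ht]; field_simp
    refine ⟨p + t • v, ?_, ?_, ?_⟩ <;> rw [mem_closedBall, dist_eq_norm]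
    · have e : x - (p + t • v) = u - t • v := by rw [hu, hp]; module
      calc ‖x - (p + t • v)‖ = ‖u - t • v‖ := by rw [e]
        _ ≤ ‖u‖ + ‖t • v‖ := norm_sub_le _ _
        _ = ‖u‖ + t * ‖v‖ := by rw [norm_smul t v, Real.norm_of_nonneg ht0]
        _ ≤ Real.sqrt 2 := by rw [htv]; linarith
    · have e : y - (p + t • v) = (1 - t) • v := by rw [hv]; module
      have h1t : (0:ℝ) ≤ 1 - t := by
        rw [ht]; simp; positivity
      rw [e, norm_smul, Real.norm_of_nonneg h1t, ht]
      have : (1 - (1 - Real.sqrt 2 / ‖v‖)) * ‖v‖ = Real.sqrt 2 := by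
        field_simp
        ring
      rw [this]
    · have e : z - (p + t • v) = -u - t • v := by rw [hu, hp]; module
      calc ‖z - (p + t • v)‖ = ‖-u - t • v‖ := by rw [e]
        _ ≤ ‖-u‖ + ‖t • v‖ := norm_sub_le _ _
        _ = ‖u‖ + t * ‖v‖ := by rw [norm_neg, norm_smul t v, Real.norm_of_nonneg ht0]
        _ ≤ Real.sqrt 2 := by rw [htv]; linarith
end

section
/- Let E = EuclideanSpace ℝ (Fin 2), let P ⊆ E be a finite point set, and let ρ* ≥ 0 be the optimal 2-center radius of P, i.e., every configuration of 2 disks covering P has maximum radius at least ρ*. Let R = (c⁰, r⁰) and B = (c¹, r¹) be two optimal solutions: configurations of 2 disks covering P with r⁰ i ≤ ρ* and r¹ i ≤ ρ* for all i. Then there exists a continuous morph (γ, ρ) on [0,1] from R to B covering P such that ρ i t ≤ √2 · ρ* for all i ∈ Fin 2 and all t ∈ [0,1]. (This is the upper-bound half of the theorem that the topological stability ratio of the minmax Euclidean 2-center problem equals √2.) -/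
open Metric Set Real Pointwise

noncomputable section

lemma sqrt2_sq : Real.sqrt 2 * Real.sqrt 2 = 2 := Real.mul_self_sqrt (by norm_num)

lemma one_le_sqrt2 : (1:ℝ) ≤ Real.sqrt 2 := by
  nlinarith [sqrt2_sq, Real.sqrt_nonneg 2]

lemma rho_le_s2 {ρ : ℝ} (hρ : 0 ≤ ρ) : ρ ≤ Real.sqrt 2 * ρ := by
  nlinarith [one_le_sqrt2]

/-- Exact midpoint distance identity. -/
lemma dist_half_add_sq (z a b : E) :
    dist z ((1/2:ℝ) • (a + b)) ^ 2 = (dist z a ^ 2 + dist z b ^ 2) / 2 - dist a b ^ 2 / 4 := by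
  have h : z - (1/2:ℝ) • (a + b) = (1/2:ℝ) • ((z - a) + (z - b)) := by module
  have h2 : a - b = (z - b) - (z - a) := by abel
  simp only [dist_eq_norm]
  rw [h, h2]
  have par := parallelogram_law_with_norm ℝ (z - a) (z - b)
  have hn : ‖(1/2:ℝ) • ((z - a) + (z - b))‖ = (1/2) * ‖(z - a) + (z - b)‖ := by
    rw [norm_smul]; norm_num
  rw [hn]
  have hrev := norm_sub_rev (z - a) (z - b)
  nlinarith [hrev, par, norm_nonneg ((z-a) + (z-b)), norm_nonneg ((z-b) - (z-a))]

lemma dist_half_le {ρ : ℝ} (z a b : E) (hza : dist z a ≤ ρ) (hzb : dist z b ≤ ρ) :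
    dist z ((1/2:ℝ) • (a + b)) ≤ Real.sqrt (ρ^2 - (dist a b / 2)^2) := by
  have h0 : (0:ℝ) ≤ ρ := le_trans dist_nonneg hza
  have key : dist z ((1/2:ℝ) • (a + b)) ^ 2 ≤ ρ^2 - (dist a b / 2)^2 := by
    rw [dist_half_add_sq]
    nlinarith [dist_nonneg (x := z) (y := a), dist_nonneg (x := z) (y := b)]
  calc dist z ((1/2:ℝ) • (a + b)) = Real.sqrt (dist z ((1/2:ℝ) • (a + b)) ^ 2) := by
        rw [Real.sqrt_sq dist_nonneg]
    _ ≤ _ := Real.sqrt_le_sqrt key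

lemma dist_half_half (a b c d : E) :
    dist ((1/2:ℝ) • (a + b)) ((1/2:ℝ) • (c + d)) ≤ dist a c / 2 + dist b d / 2 := by
  have h : (1/2:ℝ) • (a + b) - (1/2:ℝ) • (c + d) = (1/2:ℝ) • (a - c) + (1/2:ℝ) • (b - d) := by
    module
  rw [dist_eq_norm, h]
  calc ‖(1/2:ℝ) • (a - c) + (1/2:ℝ) • (b - d)‖
      ≤ ‖(1/2:ℝ) • (a - c)‖ + ‖(1/2:ℝ) • (b - d)‖ := norm_add_le _ _
    _ = dist a c / 2 + dist b d / 2 := by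
        rw [norm_smul, norm_smul, dist_eq_norm, dist_eq_norm]
        simp [Real.norm_eq_abs]
        ring

/-- scalar: h + sqrt(ρ²-h²) ≤ √2 ρ -/
lemma h_add_sigma_le {ρ h : ℝ} (h0 : 0 ≤ h) (hρ : h ≤ ρ) :
    h + Real.sqrt (ρ^2 - h^2) ≤ Real.sqrt 2 * ρ := by
  have hρ0 : 0 ≤ ρ := le_trans h0 hρ
  have hs : Real.sqrt (ρ^2 - h^2) ≤ Real.sqrt 2 * ρ - h := by
    have hrhs : 0 ≤ Real.sqrt 2 * ρ - h := by nlinarith [one_le_sqrt2]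
    have : ρ^2 - h^2 ≤ (Real.sqrt 2 * ρ - h)^2 := by
      nlinarith [sq_nonneg (ρ - Real.sqrt 2 * h), sqrt2_sq]
    calc Real.sqrt (ρ^2 - h^2) ≤ Real.sqrt ((Real.sqrt 2 * ρ - h)^2) := Real.sqrt_le_sqrt this
      _ = _ := Real.sqrt_sq hrhs
  linarith


lemma norm_smul_nn {t : ℝ} (ht : 0 ≤ t) (x : E) : ‖t • x‖ = t * ‖x‖ := by
  rw [norm_smul, Real.norm_eq_abs, abs_of_nonneg ht]

/-- Triangle covering lemma: two short sides ≤ 2ρ, long side ≤ 2√2ρ. -/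
lemma tri_cover {ρ : ℝ} (hρ : 0 ≤ ρ) (z u v : E)
    (hzu : dist z u ≤ 2*ρ) (hzv : dist z v ≤ 2*ρ)
    (huv : dist u v ≤ 2*(Real.sqrt 2 * ρ)) :
    ∃ x : E, dist z x ≤ Real.sqrt 2 * ρ ∧ dist u x ≤ Real.sqrt 2 * ρ ∧
      dist v x ≤ Real.sqrt 2 * ρ := by
  set S := Real.sqrt 2 * ρ with hSdef
  have hS : 0 ≤ S := by positivity
  set n := (1/2:ℝ) • (u + v) with hn
  have hun : dist u n ≤ dist u v / 2 := by
    have : u - n = (1/2:ℝ) • (u - v) := by rw [hn]; module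
    rw [dist_eq_norm, this, norm_smul, ← dist_eq_norm]
    simp [Real.norm_eq_abs]
    linarith [dist_nonneg (x := u) (y := v)]
  have hvn : dist v n ≤ dist u v / 2 := by
    have : v - n = (1/2:ℝ) • (v - u) := by rw [hn]; module
    rw [dist_eq_norm, this, norm_smul, ← dist_eq_norm, dist_comm v u]
    simp [Real.norm_eq_abs]
    linarith [dist_nonneg (x := u) (y := v)]
  have hL2 : dist z n ^ 2 ≤ 4*ρ^2 - dist u v ^2 / 4 := by
    rw [hn, dist_half_add_sq]
    nlinarith [dist_nonneg (x := z) (y := u), dist_nonneg (x := z) (y := v)]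
  have hLle : dist z n ≤ 2*S - dist u v / 2 := by
    have hpos : 0 ≤ 2*S - dist u v / 2 := by linarith
    have h2 : dist z n ^2 ≤ (2*S - dist u v / 2)^2 := by
      have hsq : S^2 = 2*ρ^2 := by rw [hSdef]; nlinarith [sqrt2_sq]
      nlinarith [sq_nonneg (dist u v - 2*S), hL2]
    calc dist z n = Real.sqrt (dist z n ^2) := (Real.sqrt_sq dist_nonneg).symm
      _ ≤ Real.sqrt ((2*S - dist u v / 2)^2) := Real.sqrt_le_sqrt h2
      _ = _ := Real.sqrt_sq hpos
  rcases le_or_gt (dist z n) S with hc | hc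
  · exact ⟨n, hc, le_trans hun (by linarith), le_trans hvn (by linarith)⟩
  · have hL0 : 0 < dist z n := lt_of_le_of_lt hS hc
    set τ := 1 - S / dist z n with hτ
    have hτ0 : 0 ≤ τ := by
      rw [hτ]
      have : S / dist z n < 1 := (div_lt_one hL0).2 hc
      linarith
    refine ⟨n + τ • (z - n), ?_, ?_, ?_⟩
    · have hzx : z - (n + τ • (z - n)) = (S / dist z n) • (z - n) := by
        rw [hτ]; module
      rw [dist_eq_norm, hzx, norm_smul_nn (by positivity), ← dist_eq_norm]
      exact le_of_eq (div_mul_cancel₀ _ (ne_of_gt hL0))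
    · have hnx : dist n (n + τ • (z - n)) = dist z n - S := by
        have : n - (n + τ • (z - n)) = (-τ) • (z - n) := by module
        rw [dist_eq_norm, this, norm_smul, Real.norm_eq_abs, abs_neg, abs_of_nonneg hτ0,
          ← dist_eq_norm, hτ]
        field_simp
      calc dist u (n + τ • (z - n)) ≤ dist u n + dist n (n + τ • (z - n)) := dist_triangle _ _ _
        _ ≤ dist u v / 2 + (dist z n - S) := by rw [hnx]; linarith
        _ ≤ S := by linarith
    · have hnx : dist n (n + τ • (z - n)) = dist z n - S := by
        have : n - (n + τ • (z - n)) = (-τ) • (z - n) := by module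
        rw [dist_eq_norm, this, norm_smul, Real.norm_eq_abs, abs_neg, abs_of_nonneg hτ0,
          ← dist_eq_norm, hτ]
        field_simp
      calc dist v (n + τ • (z - n)) ≤ dist v n + dist n (n + τ • (z - n)) := dist_triangle _ _ _
        _ ≤ dist u v / 2 + (dist z n - S) := by rw [hnx]; linarith
        _ ≤ S := by linarith

/-- Segment covering: cluster around c of radius σ plus far point v. -/
lemma seg_cover {ρ : ℝ} (c v : E) (σ : ℝ) (hσ0 : 0 ≤ σ) (hσS : σ ≤ Real.sqrt 2 * ρ)
    (hD : dist c v ≤ 2*(Real.sqrt 2 * ρ) - σ) :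
    ∃ x : E, (∀ w : E, dist w c ≤ σ → dist w x ≤ Real.sqrt 2 * ρ) ∧
      dist v x ≤ Real.sqrt 2 * ρ := by
  set S := Real.sqrt 2 * ρ with hSdef
  have hS : 0 ≤ S := le_trans hσ0 hσS
  rcases le_or_gt (dist c v) S with hc | hc
  · exact ⟨c, fun w hw => le_trans hw hσS, by rwa [dist_comm]⟩
  · have hL0 : 0 < dist c v := lt_of_le_of_lt hS hc
    refine ⟨v + (S / dist c v) • (c - v), ?_, ?_⟩
    · intro w hw
      have hcx : dist c (v + (S / dist c v) • (c - v)) = dist c v - S := by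
        have hh : c - (v + (S / dist c v) • (c - v)) = (1 - S / dist c v) • (c - v) := by
          module
        have h1 : S / dist c v ≤ 1 := by
          rw [div_le_one hL0]; linarith
        rw [dist_eq_norm, hh, norm_smul_nn (by linarith), ← dist_eq_norm]
        field_simp
      calc dist w (v + (S / dist c v) • (c - v))
          ≤ dist w c + dist c (v + (S / dist c v) • (c - v)) := dist_triangle _ _ _
        _ ≤ σ + (dist c v - S) := by rw [hcx]; linarith
        _ ≤ S := by linarith
    · have : v - (v + (S / dist c v) • (c - v)) = (-(S / dist c v)) • (c - v) := by module
      rw [dist_eq_norm, this, norm_smul, Real.norm_eq_abs, abs_neg,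
        abs_of_nonneg (by positivity), ← dist_eq_norm]
      exact le_of_eq (div_mul_cancel₀ _ (ne_of_gt hL0))

section Cover

variable {ρ : ℝ} (α β γ δ : E)

/-- membership type: point lies in lens (α,β) [pivot], (α,γ), or (β,δ). -/
def TT (ρ : ℝ) (α β γ δ z : E) : Prop :=
  (dist z α ≤ ρ ∧ dist z β ≤ ρ) ∨ (dist z α ≤ ρ ∧ dist z γ ≤ ρ) ∨
    (dist z β ≤ ρ ∧ dist z δ ≤ ρ)

lemma w_tri (hρ : 0 ≤ ρ)
    (hSig : Real.sqrt (ρ^2 - (dist α γ / 2)^2) + Real.sqrt (ρ^2 - (dist β δ / 2)^2)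
      + dist α β / 2 + dist γ δ / 2 ≤ 2*(Real.sqrt 2 * ρ))
    (z u v : E)
    (hz : dist z α ≤ ρ ∧ dist z β ≤ ρ) (hu : dist u α ≤ ρ ∧ dist u γ ≤ ρ)
    (hv : dist v β ≤ ρ ∧ dist v δ ≤ ρ) :
    ∃ x : E, dist z x ≤ Real.sqrt 2 * ρ ∧ dist u x ≤ Real.sqrt 2 * ρ ∧
      dist v x ≤ Real.sqrt 2 * ρ := by
  apply tri_cover hρ
  · calc dist z u ≤ dist z α + dist α u := dist_triangle _ _ _
      _ ≤ ρ + ρ := add_le_add hz.1 (by rw [dist_comm]; exact hu.1)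
      _ = 2*ρ := by ring
  · calc dist z v ≤ dist z β + dist β v := dist_triangle _ _ _
      _ ≤ ρ + ρ := add_le_add hz.2 (by rw [dist_comm]; exact hv.1)
      _ = 2*ρ := by ring
  · calc dist u v ≤ dist u ((1/2:ℝ) • (α + γ)) + dist ((1/2:ℝ) • (α + γ)) v :=
        dist_triangle _ _ _
      _ ≤ dist u ((1/2:ℝ) • (α + γ)) + (dist ((1/2:ℝ) • (α + γ)) ((1/2:ℝ) • (β + δ))
          + dist ((1/2:ℝ) • (β + δ)) v) := by
          gcongr; exact dist_triangle _ _ _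
      _ ≤ Real.sqrt (ρ^2 - (dist α γ / 2)^2) + ((dist α β / 2 + dist γ δ / 2)
          + Real.sqrt (ρ^2 - (dist β δ / 2)^2)) := by
          gcongr
          · exact dist_half_le u α γ hu.1 hu.2
          · exact dist_half_half α γ β δ
          · rw [dist_comm]; exact dist_half_le v β δ hv.1 hv.2
      _ ≤ 2*(Real.sqrt 2 * ρ) := by linarith

lemma sigma_le_S (hρ : 0 ≤ ρ) (a b : E) :
    Real.sqrt (ρ^2 - (dist a b / 2)^2) ≤ Real.sqrt 2 * ρ := by
  calc Real.sqrt (ρ^2 - (dist a b / 2)^2) ≤ Real.sqrt (ρ^2) :=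
      Real.sqrt_le_sqrt (by nlinarith [sq_nonneg (dist a b / 2)])
    _ = ρ := Real.sqrt_sq hρ
    _ ≤ Real.sqrt 2 * ρ := rho_le_s2 hρ

lemma w_p2a (hρ : 0 ≤ ρ)
    (hSig : Real.sqrt (ρ^2 - (dist α γ / 2)^2) + Real.sqrt (ρ^2 - (dist β δ / 2)^2)
      + dist α β / 2 + dist γ δ / 2 ≤ 2*(Real.sqrt 2 * ρ))
    (u u' v : E)
    (hu : dist u α ≤ ρ ∧ dist u γ ≤ ρ) (hu' : dist u' α ≤ ρ ∧ dist u' γ ≤ ρ)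
    (hv : dist v β ≤ ρ ∧ dist v δ ≤ ρ) :
    ∃ x : E, dist u x ≤ Real.sqrt 2 * ρ ∧ dist u' x ≤ Real.sqrt 2 * ρ ∧
      dist v x ≤ Real.sqrt 2 * ρ := by
  obtain ⟨x, hcov, hvx⟩ := seg_cover (ρ := ρ) ((1/2:ℝ) • (α + γ)) v
    (Real.sqrt (ρ^2 - (dist α γ / 2)^2)) (Real.sqrt_nonneg _) (sigma_le_S hρ α γ)
    (by
      calc dist ((1/2:ℝ) • (α + γ)) v
          ≤ dist ((1/2:ℝ) • (α + γ)) ((1/2:ℝ) • (β + δ)) + dist ((1/2:ℝ) • (β + δ)) v :=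
            dist_triangle _ _ _
        _ ≤ (dist α β / 2 + dist γ δ / 2) + Real.sqrt (ρ^2 - (dist β δ / 2)^2) := by
            gcongr
            · exact dist_half_half α γ β δ
            · rw [dist_comm]; exact dist_half_le v β δ hv.1 hv.2
        _ ≤ 2*(Real.sqrt 2 * ρ) - Real.sqrt (ρ^2 - (dist α γ / 2)^2) := by linarith)
  exact ⟨x, hcov u (dist_half_le u α γ hu.1 hu.2), hcov u' (dist_half_le u' α γ hu'.1 hu'.2), hvx⟩

lemma w_p2b (hρ : 0 ≤ ρ)
    (hSig : Real.sqrt (ρ^2 - (dist α γ / 2)^2) + Real.sqrt (ρ^2 - (dist β δ / 2)^2)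
      + dist α β / 2 + dist γ δ / 2 ≤ 2*(Real.sqrt 2 * ρ))
    (u v v' : E)
    (hu : dist u α ≤ ρ ∧ dist u γ ≤ ρ)
    (hv : dist v β ≤ ρ ∧ dist v δ ≤ ρ) (hv' : dist v' β ≤ ρ ∧ dist v' δ ≤ ρ) :
    ∃ x : E, dist u x ≤ Real.sqrt 2 * ρ ∧ dist v x ≤ Real.sqrt 2 * ρ ∧
      dist v' x ≤ Real.sqrt 2 * ρ := by
  obtain ⟨x, hcov, hux⟩ := seg_cover (ρ := ρ) ((1/2:ℝ) • (β + δ)) u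
    (Real.sqrt (ρ^2 - (dist β δ / 2)^2)) (Real.sqrt_nonneg _) (sigma_le_S hρ β δ)
    (by
      calc dist ((1/2:ℝ) • (β + δ)) u
          ≤ dist ((1/2:ℝ) • (β + δ)) ((1/2:ℝ) • (α + γ)) + dist ((1/2:ℝ) • (α + γ)) u :=
            dist_triangle _ _ _
        _ ≤ (dist β α / 2 + dist δ γ / 2) + Real.sqrt (ρ^2 - (dist α γ / 2)^2) := by
            gcongr
            · exact dist_half_half β δ α γ
            · rw [dist_comm]; exact dist_half_le u α γ hu.1 hu.2
        _ ≤ 2*(Real.sqrt 2 * ρ) - Real.sqrt (ρ^2 - (dist β δ / 2)^2) := by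
            rw [dist_comm β α, dist_comm δ γ]; linarith)
  exact ⟨x, hux, hcov v (dist_half_le v β δ hv.1 hv.2), hcov v' (dist_half_le v' β δ hv'.1 hv'.2)⟩

lemma cover3 (hρ : 0 ≤ ρ)
    (hSig : Real.sqrt (ρ^2 - (dist α γ / 2)^2) + Real.sqrt (ρ^2 - (dist β δ / 2)^2)
      + dist α β / 2 + dist γ δ / 2 ≤ 2*(Real.sqrt 2 * ρ))
    (z1 z2 z3 : E) (h1 : TT ρ α β γ δ z1) (h2 : TT ρ α β γ δ z2) (h3 : TT ρ α β γ δ z3) :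
    ∃ x : E, dist z1 x ≤ Real.sqrt 2 * ρ ∧ dist z2 x ≤ Real.sqrt 2 * ρ ∧
      dist z3 x ≤ Real.sqrt 2 * ρ := by
  have hS : ρ ≤ Real.sqrt 2 * ρ := rho_le_s2 hρ
  rcases h1 with h1 | h1 | h1 <;> rcases h2 with h2 | h2 | h2 <;> rcases h3 with h3 | h3 | h3
  · exact ⟨α, h1.1.trans hS, h2.1.trans hS, h3.1.trans hS⟩
  · exact ⟨α, h1.1.trans hS, h2.1.trans hS, h3.1.trans hS⟩
  · exact ⟨β, h1.2.trans hS, h2.2.trans hS, h3.1.trans hS⟩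
  · exact ⟨α, h1.1.trans hS, h2.1.trans hS, h3.1.trans hS⟩
  · exact ⟨α, h1.1.trans hS, h2.1.trans hS, h3.1.trans hS⟩
  · exact w_tri α β γ δ hρ hSig z1 z2 z3 h1 h2 h3
  · exact ⟨β, h1.2.trans hS, h2.1.trans hS, h3.2.trans hS⟩
  · exact (w_tri α β γ δ hρ hSig z1 z3 z2 h1 h3 h2).imp fun x h => ⟨h.1, h.2.2, h.2.1⟩
  · exact ⟨β, h1.2.trans hS, h2.1.trans hS, h3.1.trans hS⟩
  · exact ⟨α, h1.1.trans hS, h2.1.trans hS, h3.1.trans hS⟩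
  · exact ⟨α, h1.1.trans hS, h2.1.trans hS, h3.1.trans hS⟩
  · exact (w_tri α β γ δ hρ hSig z2 z1 z3 h2 h1 h3).imp fun x h => ⟨h.2.1, h.1, h.2.2⟩
  · exact ⟨α, h1.1.trans hS, h2.1.trans hS, h3.1.trans hS⟩
  · exact ⟨α, h1.1.trans hS, h2.1.trans hS, h3.1.trans hS⟩
  · exact w_p2a α β γ δ hρ hSig z1 z2 z3 h1 h2 h3
  · exact (w_tri α β γ δ hρ hSig z3 z1 z2 h3 h1 h2).imp fun x h => ⟨h.2.1, h.2.2, h.1⟩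
  · exact (w_p2a α β γ δ hρ hSig z1 z3 z2 h1 h3 h2).imp fun x h => ⟨h.1, h.2.2, h.2.1⟩
  · exact w_p2b α β γ δ hρ hSig z1 z2 z3 h1 h2 h3
  · exact ⟨β, h1.1.trans hS, h2.2.trans hS, h3.2.trans hS⟩
  · exact (w_tri α β γ δ hρ hSig z2 z3 z1 h2 h3 h1).imp fun x h => ⟨h.2.2, h.1, h.2.1⟩
  · exact ⟨β, h1.1.trans hS, h2.2.trans hS, h3.1.trans hS⟩
  · exact (w_tri α β γ δ hρ hSig z3 z2 z1 h3 h2 h1).imp fun x h => ⟨h.2.2, h.2.1, h.1⟩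
  · exact (w_p2a α β γ δ hρ hSig z2 z3 z1 h2 h3 h1).imp fun x h => ⟨h.2.2, h.1, h.2.1⟩
  · exact (w_p2b α β γ δ hρ hSig z2 z1 z3 h2 h1 h3).imp fun x h => ⟨h.2.1, h.1, h.2.2⟩
  · exact ⟨β, h1.1.trans hS, h2.1.trans hS, h3.2.trans hS⟩
  · exact (w_p2b α β γ δ hρ hSig z3 z1 z2 h3 h1 h2).imp fun x h => ⟨h.2.1, h.2.2, h.1⟩
  · exact ⟨β, h1.1.trans hS, h2.1.trans hS, h3.1.trans hS⟩

end Cover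

lemma finset_three {I : Finset E} (h3 : I.card ≤ 3) (hne : I.Nonempty) :
    ∃ a b c, a ∈ I ∧ b ∈ I ∧ c ∈ I ∧ ∀ w ∈ I, w = a ∨ w = b ∨ w = c := by
  have h1 : 1 ≤ I.card := hne.card_pos
  classical
  have : I.card = 1 ∨ I.card = 2 ∨ I.card = 3 := by omega
  rcases this with h | h | h
  · obtain ⟨a, hI⟩ := Finset.card_eq_one.1 h
    exact ⟨a, a, a, by simp [hI], by simp [hI], by simp [hI],
      by intro w hw; rw [hI] at hw; simp at hw; tauto⟩
  · obtain ⟨a, b, hab, hI⟩ := Finset.card_eq_two.1 h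
    exact ⟨a, b, b, by simp [hI], by simp [hI], by simp [hI],
      by intro w hw; rw [hI] at hw; simp at hw; tauto⟩
  · obtain ⟨a, b, c, hab, hac, hbc, hI⟩ := Finset.card_eq_three.1 h
    exact ⟨a, b, c, by simp [hI], by simp [hI], by simp [hI],
      by intro w hw; rw [hI] at hw; simp at hw; tauto⟩

lemma coverQ {ρ : ℝ} (α β γ δ : E) (hρ : 0 ≤ ρ)
    (hSig : Real.sqrt (ρ^2 - (dist α γ / 2)^2) + Real.sqrt (ρ^2 - (dist β δ / 2)^2)
      + dist α β / 2 + dist γ δ / 2 ≤ 2*(Real.sqrt 2 * ρ))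
    (Q : Finset E) (hQ : ∀ z ∈ Q, TT ρ α β γ δ z) :
    ∃ x : E, ∀ z ∈ Q, dist z x ≤ Real.sqrt 2 * ρ := by
  have hdim : Module.finrank ℝ E = 2 := finrank_euclideanSpace_fin
  have hhelly := Convex.helly_theorem' (𝕜 := ℝ)
    (F := fun z : E => Metric.closedBall z (Real.sqrt 2 * ρ)) (s := Q)
    (fun i _ => convex_closedBall _ _) ?_
  · obtain ⟨x, hx⟩ := hhelly
    refine ⟨x, fun z hz => ?_⟩
    have := Set.mem_iInter₂.1 hx z hz
    rw [Metric.mem_closedBall, dist_comm] at this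
    exact this
  · intro I hIQ hcard
    rw [hdim] at hcard
    rcases I.eq_empty_or_nonempty with rfl | hne
    · simp
    · obtain ⟨a, b, c, ha, hb, hc, hall⟩ := finset_three hcard hne
      obtain ⟨x, hxa, hxb, hxc⟩ := cover3 α β γ δ hρ hSig a b c
        (hQ a (hIQ ha)) (hQ b (hIQ hb)) (hQ c (hIQ hc))
      refine ⟨x, Set.mem_iInter₂.2 fun w hw => ?_⟩
      rw [Metric.mem_closedBall, dist_comm]
      rcases hall w hw with rfl | rfl | rfl
      · exact hxa
      · exact hxb
      · exact hxc

section Builder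

variable {V : Type*} [NormedAddCommGroup V] [NormedSpace ℝ V]

/-- Piecewise linear path through 4 keyframes, with breakpoints 1/3 and 2/3. -/
def pw3 (k0 k1 k2 k3 : V) (t : ℝ) : V :=
  if t ≤ 1/3 then k0 + (3*t) • (k1 - k0)
  else if t ≤ 2/3 then k1 + (3*t - 1) • (k2 - k1)
  else k2 + (3*t - 2) • (k3 - k2)

lemma pw3_zero (k0 k1 k2 k3 : V) : pw3 k0 k1 k2 k3 0 = k0 := by
  simp [pw3]

lemma pw3_one (k0 k1 k2 k3 : V) : pw3 k0 k1 k2 k3 1 = k3 := by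
  norm_num [pw3]

lemma pw3_continuous (k0 k1 k2 k3 : V) : Continuous (pw3 k0 k1 k2 k3) := by
  unfold pw3
  apply Continuous.if_le
  · exact continuous_const.add ((continuous_const.mul continuous_id).smul continuous_const)
  · apply Continuous.if_le
    · exact continuous_const.add
        (((continuous_const.mul continuous_id).sub continuous_const).smul continuous_const)
    · exact continuous_const.add
        (((continuous_const.mul continuous_id).sub continuous_const).smul continuous_const)
    · exact continuous_id
    · exact continuous_const
    · intro a ha
      norm_num [ha]
  · exact continuous_id
  · exact continuous_const
  · intro a ha
    have h2 : a ≤ 2/3 := by rw [ha]; norm_num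
    norm_num [ha, if_pos h2]

lemma pw3_eval0 (k0 k1 k2 k3 : V) {t : ℝ} (h : t ≤ 1/3) :
    pw3 k0 k1 k2 k3 t = k0 + (3*t) • (k1 - k0) := by unfold pw3; rw [if_pos h]

lemma pw3_eval1 (k0 k1 k2 k3 : V) {t : ℝ} (h0 : ¬ (t ≤ 1/3)) (h1 : t ≤ 2/3) :
    pw3 k0 k1 k2 k3 t = k1 + (3*t - 1) • (k2 - k1) := by unfold pw3; rw [if_neg h0, if_pos h1]

lemma pw3_eval2 (k0 k1 k2 k3 : V) {t : ℝ} (h1 : ¬ (t ≤ 2/3)) :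
    pw3 k0 k1 k2 k3 t = k2 + (3*t - 2) • (k3 - k2) := by
  have h0 : ¬ (t ≤ 1/3) := by intro h; exact h1 (by linarith)
  unfold pw3; rw [if_neg h0, if_neg h1]

end Builder

/-- covering along a linear interpolation. -/
lemma lerp_cover (p c0 c1 : E) (r0 r1 s : ℝ) (hs0 : 0 ≤ s) (hs1 : s ≤ 1)
    (h0 : dist p c0 ≤ r0) (h1 : dist p c1 ≤ r1) :
    dist p (c0 + s • (c1 - c0)) ≤ r0 + s * (r1 - r0) := by
  have hsplit : p - (c0 + s • (c1 - c0)) = (1 - s) • (p - c0) + s • (p - c1) := by module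
  rw [dist_eq_norm, hsplit]
  calc ‖(1 - s) • (p - c0) + s • (p - c1)‖
      ≤ ‖(1 - s) • (p - c0)‖ + ‖s • (p - c1)‖ := norm_add_le _ _
    _ = (1 - s) * ‖p - c0‖ + s * ‖p - c1‖ := by
        rw [norm_smul_nn (by linarith), norm_smul_nn hs0]
    _ ≤ (1 - s) * r0 + s * r1 := by
        have hn0 : (0:ℝ) ≤ ‖p - c0‖ := norm_nonneg _
        rw [← dist_eq_norm p c0, ← dist_eq_norm p c1]
        nlinarith [dist_nonneg (x := p) (y := c0), dist_nonneg (x := p) (y := c1)]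
    _ = r0 + s * (r1 - r0) := by ring

lemma lerp_r_le (r0 r1 M s : ℝ) (hs0 : 0 ≤ s) (hs1 : s ≤ 1) (h0 : r0 ≤ M) (h1 : r1 ≤ M) :
    r0 + s * (r1 - r0) ≤ M := by nlinarith

lemma lerp_r_nn (r0 r1 s : ℝ) (hs0 : 0 ≤ s) (hs1 : s ≤ 1) (h0 : 0 ≤ r0) (h1 : 0 ≤ r1) :
    0 ≤ r0 + s * (r1 - r0) := by nlinarith

/-- Build a 3-stage piecewise-linear morph from keyframes. -/
lemma build_morph (P : Set E) (c0 c1 : Fin 2 → E) (r0 r1 : Fin 2 → ℝ) (M : ℝ)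
    (K0 K1 K2 K3 : Fin 2 → E) (R0 R1 R2 R3 : Fin 2 → ℝ)
    (hK0 : ∀ i, K0 i = c0 i) (hR0 : ∀ i, R0 i = r0 i)
    (σ : Equiv.Perm (Fin 2))
    (hK3 : ∀ i, K3 i = c1 (σ i)) (hR3 : ∀ i, R3 i = r1 (σ i))
    (hnn : ∀ i, 0 ≤ R0 i ∧ 0 ≤ R1 i ∧ 0 ≤ R2 i ∧ 0 ≤ R3 i)
    (hM : ∀ i, R0 i ≤ M ∧ R1 i ≤ M ∧ R2 i ≤ M ∧ R3 i ≤ M)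
    (hcov0 : ∀ p ∈ P, ∃ i, dist p (K0 i) ≤ R0 i ∧ dist p (K1 i) ≤ R1 i)
    (hcov1 : ∀ p ∈ P, ∃ i, dist p (K1 i) ≤ R1 i ∧ dist p (K2 i) ≤ R2 i)
    (hcov2 : ∀ p ∈ P, ∃ i, dist p (K2 i) ≤ R2 i ∧ dist p (K3 i) ≤ R3 i) :
    ∃ γ ρ, IsMorph 2 P c0 c1 r0 r1 γ ρ ∧
      ∀ i, ∀ t ∈ Set.Icc (0:ℝ) 1, ρ i t ≤ M := by
  refine ⟨fun i => pw3 (K0 i) (K1 i) (K2 i) (K3 i), fun i => pw3 (R0 i) (R1 i) (R2 i) (R3 i),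
    ⟨fun i => (pw3_continuous _ _ _ _).continuousOn,
     fun i => (pw3_continuous _ _ _ _).continuousOn, ?_, ?_, ?_, ?_, ?_⟩, ?_⟩
  · -- nonnegativity
    intro i t ht
    obtain ⟨ht0, ht1⟩ := ht
    dsimp only
    rcases le_or_gt t (1/3) with h | h
    · rw [pw3_eval0 _ _ _ _ h]
      exact lerp_r_nn _ _ _ (by linarith) (by linarith) (hnn i).1 (hnn i).2.1
    · rcases le_or_gt t (2/3) with h2 | h2
      · rw [pw3_eval1 _ _ _ _ (not_le.2 h) h2]
        exact lerp_r_nn _ _ _ (by linarith) (by linarith) (hnn i).2.1 (hnn i).2.2.1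
      · rw [pw3_eval2 _ _ _ _ (not_le.2 h2)]
        exact lerp_r_nn _ _ _ (by linarith) (by linarith) (hnn i).2.2.1 (hnn i).2.2.2
  · intro i; dsimp only; rw [pw3_zero]; exact hK0 i
  · intro i; dsimp only; rw [pw3_zero]; exact hR0 i
  · exact ⟨σ, fun i => by dsimp only; rw [pw3_one]; exact hK3 i,
      fun i => by dsimp only; rw [pw3_one]; exact hR3 i⟩
  · -- coverage
    intro t ht p hp
    obtain ⟨ht0, ht1⟩ := ht
    rcases le_or_gt t (1/3) with h | h
    · obtain ⟨i, hi0, hi1⟩ := hcov0 p hp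
      refine Set.mem_iUnion.2 ⟨i, Metric.mem_closedBall.2 ?_⟩
      dsimp only
      rw [pw3_eval0 _ _ _ _ h, pw3_eval0 _ _ _ _ h]
      exact lerp_cover _ _ _ _ _ _ (by linarith) (by linarith) hi0 hi1
    · rcases le_or_gt t (2/3) with h2 | h2
      · obtain ⟨i, hi1, hi2⟩ := hcov1 p hp
        refine Set.mem_iUnion.2 ⟨i, Metric.mem_closedBall.2 ?_⟩
        dsimp only
        rw [pw3_eval1 _ _ _ _ (not_le.2 h) h2, pw3_eval1 _ _ _ _ (not_le.2 h) h2]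
        exact lerp_cover _ _ _ _ _ _ (by linarith) (by linarith) hi1 hi2
      · obtain ⟨i, hi2, hi3⟩ := hcov2 p hp
        refine Set.mem_iUnion.2 ⟨i, Metric.mem_closedBall.2 ?_⟩
        dsimp only
        rw [pw3_eval2 _ _ _ _ (not_le.2 h2), pw3_eval2 _ _ _ _ (not_le.2 h2)]
        exact lerp_cover _ _ _ _ _ _ (by linarith) (by linarith) hi2 hi3
  · -- radius bound
    intro i t ht
    obtain ⟨ht0, ht1⟩ := ht
    dsimp only
    rcases le_or_gt t (1/3) with h | h
    · rw [pw3_eval0 _ _ _ _ h]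
      exact lerp_r_le _ _ _ _ (by linarith) (by linarith) (hM i).1 (hM i).2.1
    · rcases le_or_gt t (2/3) with h2 | h2
      · rw [pw3_eval1 _ _ _ _ (not_le.2 h) h2]
        exact lerp_r_le _ _ _ _ (by linarith) (by linarith) (hM i).2.1 (hM i).2.2.1
      · rw [pw3_eval2 _ _ _ _ (not_le.2 h2)]
        exact lerp_r_le _ _ _ _ (by linarith) (by linarith) (hM i).2.2.1 (hM i).2.2.2

/-- Schema A : identity pairing, disk 0 parks at x covering P∩(R1 ∪ B1). -/
lemma schemaA (P : Set E) (ρs : ℝ) (hρs : 0 ≤ ρs)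
    (c0 c1 : Fin 2 → E) (r0 r1 : Fin 2 → ℝ)
    (hr0 : ∀ i, 0 ≤ r0 i) (hr1 : ∀ i, 0 ≤ r1 i)
    (hb0 : ∀ i, r0 i ≤ ρs) (hb1 : ∀ i, r1 i ≤ ρs)
    (h0 : P ⊆ ⋃ i, Metric.closedBall (c0 i) (r0 i))
    (h1 : P ⊆ ⋃ i, Metric.closedBall (c1 i) (r1 i))
    (x : E)
    (hx : ∀ p ∈ P, (dist p (c0 0) ≤ r0 0 ∨ dist p (c1 0) ≤ r1 0) →
      dist p x ≤ Real.sqrt 2 * ρs) :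
    ∃ γ ρ, IsMorph 2 P c0 c1 r0 r1 γ ρ ∧
      ∀ i, ∀ t ∈ Set.Icc (0:ℝ) 1, ρ i t ≤ Real.sqrt 2 * ρs := by
  have hS : ∀ r, r ≤ ρs → r ≤ Real.sqrt 2 * ρs := fun r hr => hr.trans (rho_le_s2 hρs)
  have hS0 : 0 ≤ Real.sqrt 2 * ρs := by positivity
  have hmem : ∀ p ∈ P, (dist p (c0 0) ≤ r0 0 ∨ dist p (c0 1) ≤ r0 1) := by
    intro p hp
    obtain ⟨i, hi⟩ := Set.mem_iUnion.1 (h0 hp)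
    rw [Metric.mem_closedBall] at hi
    fin_cases i
    · exact Or.inl hi
    · exact Or.inr hi
  have hmem1 : ∀ p ∈ P, (dist p (c1 0) ≤ r1 0 ∨ dist p (c1 1) ≤ r1 1) := by
    intro p hp
    obtain ⟨i, hi⟩ := Set.mem_iUnion.1 (h1 hp)
    rw [Metric.mem_closedBall] at hi
    fin_cases i
    · exact Or.inl hi
    · exact Or.inr hi
  apply build_morph P c0 c1 r0 r1 (Real.sqrt 2 * ρs) c0
    ![x, c0 1] ![x, c1 1] c1
    r0 ![Real.sqrt 2 * ρs, r0 1] ![Real.sqrt 2 * ρs, r1 1] r1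
    (fun i => rfl) (fun i => rfl) (Equiv.refl _) (fun i => rfl) (fun i => rfl)
  · intro i
    fin_cases i <;>
      simp only [Matrix.cons_val_zero, Matrix.cons_val_one, Matrix.head_cons] <;>
      exact ⟨hr0 _, by first | exact hS0 | exact hr0 _,
        by first | exact hS0 | exact hr1 _, hr1 _⟩
  · intro i
    fin_cases i <;>
      simp only [Matrix.cons_val_zero, Matrix.cons_val_one, Matrix.head_cons] <;>
      exact ⟨hS _ (hb0 _), by first | exact le_refl _ | exact hS _ (hb0 _),
        by first | exact le_refl _ | exact hS _ (hb1 _), hS _ (hb1 _)⟩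
  · -- stage 0 : disk0 a1 → x ; disk1 static
    intro p hp
    rcases hmem p hp with h | h
    · exact ⟨0, h, by simpa using hx p hp (Or.inl h)⟩
    · exact ⟨1, h, by simpa using h⟩
  · -- stage 1 : disk0 parked at x ; disk1 a2 → b2
    intro p hp
    by_cases hq : dist p (c0 0) ≤ r0 0 ∨ dist p (c1 0) ≤ r1 0
    · exact ⟨0, by simpa using hx p hp hq, by simpa using hx p hp hq⟩
    · push_neg at hq
      have hA : dist p (c0 1) ≤ r0 1 := by
        rcases hmem p hp with h | h
        · exact absurd h (not_le.2 hq.1)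
        · exact h
      have hB : dist p (c1 1) ≤ r1 1 := by
        rcases hmem1 p hp with h | h
        · exact absurd h (not_le.2 hq.2)
        · exact h
      exact ⟨1, by simpa using hA, by simpa using hB⟩
  · -- stage 2 : disk0 x → b1 ; disk1 static at b2
    intro p hp
    by_cases hq : dist p (c1 0) ≤ r1 0
    · exact ⟨0, by simpa using hx p hp (Or.inr hq), by simpa using hq⟩
    · have hB : dist p (c1 1) ≤ r1 1 := by
        rcases hmem1 p hp with h | h
        · exact absurd h hq
        · exact h
      exact ⟨1, by simpa using hB, by simpa using hB⟩

/-- Schema C : swap pairing, disk 0 parks at x covering P∩(R1 ∪ B1ᶜ). -/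
lemma schemaC (P : Set E) (ρs : ℝ) (hρs : 0 ≤ ρs)
    (c0 c1 : Fin 2 → E) (r0 r1 : Fin 2 → ℝ)
    (hr0 : ∀ i, 0 ≤ r0 i) (hr1 : ∀ i, 0 ≤ r1 i)
    (hb0 : ∀ i, r0 i ≤ ρs) (hb1 : ∀ i, r1 i ≤ ρs)
    (h0 : P ⊆ ⋃ i, Metric.closedBall (c0 i) (r0 i))
    (h1 : P ⊆ ⋃ i, Metric.closedBall (c1 i) (r1 i))
    (x : E)
    (hx : ∀ p ∈ P, (dist p (c0 0) ≤ r0 0 ∨ ¬ (dist p (c1 0) ≤ r1 0)) →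
      dist p x ≤ Real.sqrt 2 * ρs) :
    ∃ γ ρ, IsMorph 2 P c0 c1 r0 r1 γ ρ ∧
      ∀ i, ∀ t ∈ Set.Icc (0:ℝ) 1, ρ i t ≤ Real.sqrt 2 * ρs := by
  have hS : ∀ r, r ≤ ρs → r ≤ Real.sqrt 2 * ρs := fun r hr => hr.trans (rho_le_s2 hρs)
  have hS0 : 0 ≤ Real.sqrt 2 * ρs := by positivity
  have hmem : ∀ p ∈ P, (dist p (c0 0) ≤ r0 0 ∨ dist p (c0 1) ≤ r0 1) := by
    intro p hp
    obtain ⟨i, hi⟩ := Set.mem_iUnion.1 (h0 hp)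
    rw [Metric.mem_closedBall] at hi
    fin_cases i
    · exact Or.inl hi
    · exact Or.inr hi
  have hmem1 : ∀ p ∈ P, (dist p (c1 0) ≤ r1 0 ∨ dist p (c1 1) ≤ r1 1) := by
    intro p hp
    obtain ⟨i, hi⟩ := Set.mem_iUnion.1 (h1 hp)
    rw [Metric.mem_closedBall] at hi
    fin_cases i
    · exact Or.inl hi
    · exact Or.inr hi
  apply build_morph P c0 c1 r0 r1 (Real.sqrt 2 * ρs) c0
    ![x, c0 1] ![x, c1 0] ![c1 1, c1 0]
    r0 ![Real.sqrt 2 * ρs, r0 1] ![Real.sqrt 2 * ρs, r1 0] ![r1 1, r1 0]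
    (fun i => rfl) (fun i => rfl) (Equiv.swap 0 1)
  · intro i
    fin_cases i <;> simp [Equiv.swap_apply_left, Equiv.swap_apply_right]
  · intro i
    fin_cases i <;> simp [Equiv.swap_apply_left, Equiv.swap_apply_right]
  · intro i
    fin_cases i <;>
      simp only [Matrix.cons_val_zero, Matrix.cons_val_one, Matrix.head_cons] <;>
      refine ⟨hr0 _, ?_, ?_, ?_⟩ <;>
      first | exact hS0 | exact hr0 _ | exact hr1 _
  · intro i
    fin_cases i <;>
      simp only [Matrix.cons_val_zero, Matrix.cons_val_one, Matrix.head_cons] <;>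
      refine ⟨hS _ (hb0 _), ?_, ?_, ?_⟩ <;>
      first | exact le_refl _ | exact hS _ (hb0 _) | exact hS _ (hb1 _)
  · -- stage 0 : disk0 a1 → x ; disk1 static
    intro p hp
    rcases hmem p hp with h | h
    · exact ⟨0, h, by simpa using hx p hp (Or.inl h)⟩
    · exact ⟨1, h, by simpa using h⟩
  · -- stage 1 : disk0 parked at x ; disk1 a2 → b1
    intro p hp
    by_cases hq : dist p (c0 1) ≤ r0 1 ∧ dist p (c1 0) ≤ r1 0
    · exact ⟨1, by simpa using hq.1, by simpa using hq.2⟩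
    · have hxp : dist p x ≤ Real.sqrt 2 * ρs := by
        by_cases hR : dist p (c0 0) ≤ r0 0
        · exact hx p hp (Or.inl hR)
        · by_cases hB : dist p (c1 0) ≤ r1 0
          · have hA : dist p (c0 1) ≤ r0 1 := by
              rcases hmem p hp with h | h
              · exact absurd h hR
              · exact h
            exact absurd ⟨hA, hB⟩ hq
          · exact hx p hp (Or.inr hB)
      exact ⟨0, by simpa using hxp, by simpa using hxp⟩
  · -- stage 2 : disk0 x → b2 ; disk1 static at b1
    intro p hp
    by_cases hq : dist p (c1 0) ≤ r1 0
    · exact ⟨1, by simpa using hq, by simpa using hq⟩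
    · have hB : dist p (c1 1) ≤ r1 1 := by
        rcases hmem1 p hp with h | h
        · exact absurd h hq
        · exact h
      exact ⟨0, by simpa using hx p hp (Or.inr hq), by simpa using hB⟩

theorem minmax_euclidean_two_center_morph_sqrt_two
    (P : Set E) (hP : P.Finite) (ρstar : ℝ) (hρstar : 0 ≤ ρstar)
    (hopt : ∀ (c : Fin 2 → E) (r : Fin 2 → ℝ),
      P ⊆ (⋃ i, Metric.closedBall (c i) (r i)) → ∃ i, ρstar ≤ r i)
    (c0 c1 : Fin 2 → E) (r0 r1 : Fin 2 → ℝ)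
    (hr0 : ∀ i, 0 ≤ r0 i) (hr1 : ∀ i, 0 ≤ r1 i)
    (h0 : P ⊆ ⋃ i, Metric.closedBall (c0 i) (r0 i))
    (h1 : P ⊆ ⋃ i, Metric.closedBall (c1 i) (r1 i))
    (hb0 : ∀ i, r0 i ≤ ρstar) (hb1 : ∀ i, r1 i ≤ ρstar) :
    ∃ γ ρ, IsMorph 2 P c0 c1 r0 r1 γ ρ ∧
      ∀ i, ∀ t ∈ Set.Icc (0:ℝ) 1, ρ i t ≤ Real.sqrt 2 * ρstar := by
  classical
  have hS : ∀ r, r ≤ ρstar → r ≤ Real.sqrt 2 * ρstar :=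
    fun r hr => hr.trans (rho_le_s2 hρstar)
  have hmem0 : ∀ p ∈ P, (dist p (c0 0) ≤ r0 0 ∨ dist p (c0 1) ≤ r0 1) := by
    intro p hp
    obtain ⟨i, hi⟩ := Set.mem_iUnion.1 (h0 hp)
    rw [Metric.mem_closedBall] at hi
    fin_cases i
    · exact Or.inl hi
    · exact Or.inr hi
  have hmem1 : ∀ p ∈ P, (dist p (c1 0) ≤ r1 0 ∨ dist p (c1 1) ≤ r1 1) := by
    intro p hp
    obtain ⟨i, hi⟩ := Set.mem_iUnion.1 (h1 hp)
    rw [Metric.mem_closedBall] at hi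
    fin_cases i
    · exact Or.inl hi
    · exact Or.inr hi
  by_cases h12 : ∀ p ∈ P, dist p (c0 0) ≤ r0 0 → dist p (c1 0) ≤ r1 0
  · refine schemaA P ρstar hρstar c0 c1 r0 r1 hr0 hr1 hb0 hb1 h0 h1 (c1 0) ?_
    intro p hp hor
    rcases hor with h | h
    · exact hS _ ((h12 p hp h).trans (hb1 0))
    · exact hS _ (h.trans (hb1 0))
  by_cases h21 : ∀ p ∈ P, dist p (c1 0) ≤ r1 0 → dist p (c0 0) ≤ r0 0
  · refine schemaA P ρstar hρstar c0 c1 r0 r1 hr0 hr1 hb0 hb1 h0 h1 (c0 0) ?_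
    intro p hp hor
    rcases hor with h | h
    · exact hS _ (h.trans (hb0 0))
    · exact hS _ ((h21 p hp h).trans (hb0 0))
  by_cases h11 : ∀ p ∈ P, dist p (c0 0) ≤ r0 0 → ¬ dist p (c1 0) ≤ r1 0
  · refine schemaC P ρstar hρstar c0 c1 r0 r1 hr0 hr1 hb0 hb1 h0 h1 (c1 1) ?_
    intro p hp hor
    have hB2 : dist p (c1 1) ≤ r1 1 := by
      rcases hmem1 p hp with h | h
      · rcases hor with hR | hB
        · exact absurd h (h11 p hp hR)
        · exact absurd h hB
      · exact h
    exact hS _ (hB2.trans (hb1 1))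
  by_cases h22 : ∀ p ∈ P, ¬ dist p (c0 0) ≤ r0 0 → dist p (c1 0) ≤ r1 0
  · refine schemaC P ρstar hρstar c0 c1 r0 r1 hr0 hr1 hb0 hb1 h0 h1 (c0 0) ?_
    intro p hp hor
    have hR1 : dist p (c0 0) ≤ r0 0 := by
      rcases hor with hR | hB
      · exact hR
      · by_contra hR
        exact hB (h22 p hp hR)
    exact hS _ (hR1.trans (hb0 0))
  -- main case : all four cells nonempty
  push_neg at h12 h21 h11 h22
  obtain ⟨p12, hp12P, hp12R, hp12B⟩ := h12
  obtain ⟨p21, hp21P, hp21B, hp21R⟩ := h21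
  obtain ⟨p11, hp11P, hp11R, hp11B⟩ := h11
  obtain ⟨p22, hp22P, hp22R, hp22B⟩ := h22
  have hd11 : dist (c0 0) (c1 0) ≤ 2*ρstar := by
    calc dist (c0 0) (c1 0) ≤ dist (c0 0) p11 + dist p11 (c1 0) := dist_triangle _ _ _
      _ ≤ ρstar + ρstar := add_le_add (by rw [dist_comm]; exact hp11R.trans (hb0 0))
          (hp11B.trans (hb1 0))
      _ = 2*ρstar := by ring
  have hp12B2 : dist p12 (c1 1) ≤ r1 1 := by
    rcases hmem1 p12 hp12P with h | h
    · exact absurd h (not_le.2 hp12B)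
    · exact h
  have hd12 : dist (c0 0) (c1 1) ≤ 2*ρstar := by
    calc dist (c0 0) (c1 1) ≤ dist (c0 0) p12 + dist p12 (c1 1) := dist_triangle _ _ _
      _ ≤ ρstar + ρstar := add_le_add (by rw [dist_comm]; exact hp12R.trans (hb0 0))
          (hp12B2.trans (hb1 1))
      _ = 2*ρstar := by ring
  have hp21R2 : dist p21 (c0 1) ≤ r0 1 := by
    rcases hmem0 p21 hp21P with h | h
    · exact absurd h (not_le.2 hp21R)
    · exact h
  have hd21 : dist (c0 1) (c1 0) ≤ 2*ρstar := by
    calc dist (c0 1) (c1 0) ≤ dist (c0 1) p21 + dist p21 (c1 0) := dist_triangle _ _ _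
      _ ≤ ρstar + ρstar := add_le_add (by rw [dist_comm]; exact hp21R2.trans (hb0 1))
          (hp21B.trans (hb1 0))
      _ = 2*ρstar := by ring
  have hp22R2 : dist p22 (c0 1) ≤ r0 1 := by
    rcases hmem0 p22 hp22P with h | h
    · exact absurd h (not_le.2 hp22R)
    · exact h
  have hp22B2 : dist p22 (c1 1) ≤ r1 1 := by
    rcases hmem1 p22 hp22P with h | h
    · exact absurd h (not_le.2 hp22B)
    · exact h
  have hd22 : dist (c0 1) (c1 1) ≤ 2*ρstar := by
    calc dist (c0 1) (c1 1) ≤ dist (c0 1) p22 + dist p22 (c1 1) := dist_triangle _ _ _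
      _ ≤ ρstar + ρstar := add_le_add (by rw [dist_comm]; exact hp22R2.trans (hb0 1))
          (hp22B2.trans (hb1 1))
      _ = 2*ρstar := by ring
  have key : ∀ d : ℝ, 0 ≤ d → d ≤ 2*ρstar →
      d/2 + Real.sqrt (ρstar^2 - (d/2)^2) ≤ Real.sqrt 2 * ρstar := by
    intro d hd0 hd2
    exact h_add_sigma_le (by positivity) (by linarith)
  have k11 := key _ dist_nonneg hd11
  have k12 := key _ dist_nonneg hd12
  have k21 := key _ dist_nonneg hd21
  have k22 := key _ dist_nonneg hd22
  by_cases hA : Real.sqrt (ρstar^2 - (dist (c0 0) (c1 1) / 2)^2)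
      + Real.sqrt (ρstar^2 - (dist (c0 1) (c1 0) / 2)^2)
      + dist (c0 0) (c1 0) / 2 + dist (c0 1) (c1 1) / 2 ≤ 2*(Real.sqrt 2 * ρstar)
  · -- triple A via Helly
    have hQfin : ({p ∈ P | dist p (c0 0) ≤ r0 0 ∨ dist p (c1 0) ≤ r1 0}).Finite :=
      hP.subset (fun p hp => hp.1)
    obtain ⟨x, hx⟩ := coverQ (c0 0) (c1 0) (c1 1) (c0 1) hρstar
      (by
        rw [dist_comm (c1 0) (c0 1), dist_comm (c1 1) (c0 1)]
        exact hA)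
      hQfin.toFinset
      (by
        intro z hz
        rw [Set.Finite.mem_toFinset] at hz
        obtain ⟨hzP, hzor⟩ := hz
        rcases hzor with hR | hB
        · by_cases hB1 : dist z (c1 0) ≤ r1 0
          · exact Or.inl ⟨hR.trans (hb0 0), hB1.trans (hb1 0)⟩
          · have hB2 : dist z (c1 1) ≤ r1 1 := by
              rcases hmem1 z hzP with h | h
              · exact absurd h hB1
              · exact h
            exact Or.inr (Or.inl ⟨hR.trans (hb0 0), hB2.trans (hb1 1)⟩)
        · by_cases hR1 : dist z (c0 0) ≤ r0 0
          · exact Or.inl ⟨hR1.trans (hb0 0), hB.trans (hb1 0)⟩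
          · have hR2 : dist z (c0 1) ≤ r0 1 := by
              rcases hmem0 z hzP with h | h
              · exact absurd h hR1
              · exact h
            exact Or.inr (Or.inr ⟨hB.trans (hb1 0), hR2.trans (hb0 1)⟩))
    refine schemaA P ρstar hρstar c0 c1 r0 r1 hr0 hr1 hb0 hb1 h0 h1 x ?_
    intro p hp hor
    exact hx p (by rw [Set.Finite.mem_toFinset]; exact ⟨hp, hor⟩)
  · -- triple C via Helly
    have hC : Real.sqrt (ρstar^2 - (dist (c0 0) (c1 0) / 2)^2)
        + Real.sqrt (ρstar^2 - (dist (c0 1) (c1 1) / 2)^2)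
        + dist (c0 0) (c1 1) / 2 + dist (c0 1) (c1 0) / 2 ≤ 2*(Real.sqrt 2 * ρstar) := by
      push_neg at hA
      linarith
    have hQfin : ({p ∈ P | dist p (c0 0) ≤ r0 0 ∨ ¬ dist p (c1 0) ≤ r1 0}).Finite :=
      hP.subset (fun p hp => hp.1)
    obtain ⟨x, hx⟩ := coverQ (c0 0) (c1 1) (c1 0) (c0 1) hρstar
      (by
        rw [dist_comm (c1 1) (c0 1), dist_comm (c1 0) (c0 1)]
        exact hC)
      hQfin.toFinset
      (by
        intro z hz
        rw [Set.Finite.mem_toFinset] at hz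
        obtain ⟨hzP, hzor⟩ := hz
        by_cases hB1 : dist z (c1 0) ≤ r1 0
        · have hR : dist z (c0 0) ≤ r0 0 := by
            rcases hzor with h | h
            · exact h
            · exact absurd hB1 h
          exact Or.inr (Or.inl ⟨hR.trans (hb0 0), hB1.trans (hb1 0)⟩)
        · have hB2 : dist z (c1 1) ≤ r1 1 := by
            rcases hmem1 z hzP with h | h
            · exact absurd h hB1
            · exact h
          by_cases hR1 : dist z (c0 0) ≤ r0 0
          · exact Or.inl ⟨hR1.trans (hb0 0), hB2.trans (hb1 1)⟩
          · have hR2 : dist z (c0 1) ≤ r0 1 := by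
              rcases hmem0 z hzP with h | h
              · exact absurd h hR1
              · exact h
            exact Or.inr (Or.inr ⟨hB2.trans (hb1 1), hR2.trans (hb0 1)⟩))
    refine schemaC P ρstar hρstar c0 c1 r0 r1 hr0 hr1 hb0 hb1 h0 h1 x ?_
    intro p hp hor
    exact hx p (by rw [Set.Finite.mem_toFinset]; exact ⟨hp, hor⟩)

end
end

section
/- Work in E∞ = ℝ × ℝ with the sup (L∞) metric, so closed balls are axis-aligned squares. Let P ⊆ E∞ be a finite point set, let k ≥ 2, and let C ≥ 0. Let R = (c⁰, r⁰) and B = (c¹, r¹) be two configurations of k squares, each covering P, with r⁰ i ≤ C and r¹ i ≤ C for all i. Then there exists a continuous morph (γ, ρ) on [0,1] from R to B covering P such that ρ i t ≤ 2C for all i ∈ Fin k and all t ∈ [0,1]. (This is the upper-bound half of the theorem that the topological stability ratio of the minmax rectilinear k-center problem equals 2.) -/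
open Metric Set Real Pointwise

noncomputable section

namespace MorphAux

noncomputable def cl (A d t : ℝ) : ℝ := max 0 (min 1 ((t - A) / d))

lemma cl_nonneg (A d t : ℝ) : 0 ≤ cl A d t := le_max_left 0 _

lemma cl_le_one (A d t : ℝ) : cl A d t ≤ 1 := max_le zero_le_one (min_le_left _ _)

lemma cl_continuous (A d : ℝ) : Continuous (cl A d) := by
  apply Continuous.max continuous_const
  apply Continuous.min continuous_const
  exact (continuous_id.sub continuous_const).div_const d

lemma cl_eq_zero {A d t : ℝ} (hd : 0 < d) (h : t ≤ A) : cl A d t = 0 := by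
  have h1 : (t - A) / d ≤ 0 := div_nonpos_of_nonpos_of_nonneg (by linarith) hd.le
  exact max_eq_left (le_trans (min_le_right _ _) h1)

lemma cl_eq_one {A d t : ℝ} (hd : 0 < d) (h : A + d ≤ t) : cl A d t = 1 := by
  have h1 : (1:ℝ) ≤ (t - A) / d := (one_le_div hd).mpr (by linarith)
  rw [cl, min_eq_left h1, max_eq_right zero_le_one]

lemma cl_le_cl {A1 A2 d t : ℝ} (hd : 0 < d) (h : A1 ≤ A2) : cl A2 d t ≤ cl A1 d t := by
  have h1 : (t - A2) / d ≤ (t - A1) / d := by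
    apply div_le_div_of_nonneg_right ?_ hd.le
    linarith
  exact max_le_max le_rfl (min_le_min le_rfl h1)

/-! ### pivot paths -/

noncomputable def pγ (a p b : ℝ × ℝ) (A1 A2 d t : ℝ) : ℝ × ℝ :=
  a + cl A1 d t • (p - a) + cl A2 d t • (b - p)

noncomputable def pρ (ra rb C A1 A2 d t : ℝ) : ℝ :=
  ra + cl A1 d t * (2*C - ra) + cl A2 d t * (rb - 2*C)

lemma pγ_continuous (a p b : ℝ × ℝ) (A1 A2 d : ℝ) : Continuous (fun t => pγ a p b A1 A2 d t) := by
  unfold pγ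
  exact (continuous_const.add ((cl_continuous A1 d).smul continuous_const)).add
    ((cl_continuous A2 d).smul continuous_const)

lemma pρ_continuous (ra rb C A1 A2 d : ℝ) : Continuous (fun t => pρ ra rb C A1 A2 d t) := by
  unfold pρ
  exact (continuous_const.add ((cl_continuous A1 d).mul continuous_const)).add
    ((cl_continuous A2 d).mul continuous_const)

lemma covR {a p b x : ℝ × ℝ} {ra rb C A1 A2 d t : ℝ} (hd : 0 < d) (hpa : dist p a ≤ ra)
    (hraC : ra ≤ C) (ht : t ≤ A2) (hx : x ∈ closedBall a ra) :
    x ∈ closedBall (pγ a p b A1 A2 d t) (pρ ra rb C A1 A2 d t) := by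
  rw [mem_closedBall] at hx ⊢
  have h2 : cl A2 d t = 0 := cl_eq_zero hd ht
  set φ := cl A1 d t with hφ
  have hφ0 : 0 ≤ φ := cl_nonneg _ _ _
  have hφ1 : φ ≤ 1 := cl_le_one _ _ _
  have hγ : pγ a p b A1 A2 d t = a + φ • (p - a) := by
    rw [pγ, h2, zero_smul, add_zero]
  have hρ : pρ ra rb C A1 A2 d t = ra + φ * (2*C - ra) := by
    rw [pρ, h2, zero_mul, add_zero]
  rw [hγ, hρ]
  have hkey : dist a (a + φ • (p - a)) = φ * dist p a := by
    have h3 : a - (a + φ • (p - a)) = -(φ • (p - a)) := by abel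
    rw [dist_eq_norm, h3, norm_neg, norm_smul, Real.norm_eq_abs, abs_of_nonneg hφ0,
      ← dist_eq_norm]
  have htri : dist x (a + φ • (p - a)) ≤ dist x a + φ * dist p a := by
    calc dist x (a + φ • (p - a)) ≤ dist x a + dist a (a + φ • (p - a)) := dist_triangle _ _ _
    _ = dist x a + φ * dist p a := by rw [hkey]
  nlinarith [mul_le_mul_of_nonneg_left hpa hφ0,
    mul_le_mul_of_nonneg_left (show ra ≤ 2*C - ra by linarith) hφ0]

lemma covB {a p b x : ℝ × ℝ} {ra rb C A1 A2 d t : ℝ} (hd : 0 < d) (hpb : dist p b ≤ rb)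
    (hrbC : rb ≤ C) (ht : A1 + d ≤ t) (hx : x ∈ closedBall b rb) :
    x ∈ closedBall (pγ a p b A1 A2 d t) (pρ ra rb C A1 A2 d t) := by
  rw [mem_closedBall] at hx ⊢
  have h1 : cl A1 d t = 1 := cl_eq_one hd ht
  set φ := cl A2 d t with hφ
  have hφ0 : 0 ≤ φ := cl_nonneg _ _ _
  have hφ1 : φ ≤ 1 := cl_le_one _ _ _
  have hγ : pγ a p b A1 A2 d t = p + φ • (b - p) := by
    rw [pγ, h1, one_smul]
    have : a + (p - a) = p := by abel
    rw [this]
  have hρ : pρ ra rb C A1 A2 d t = 2*C + φ * (rb - 2*C) := by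
    rw [pρ, h1, one_mul]; ring
  rw [hγ, hρ]
  have hkey : dist (p + φ • (b - p)) b = (1 - φ) * dist p b := by
    have h3 : p + φ • (b - p) - b = (1 - φ) • (p - b) := by
      rw [sub_smul, one_smul, smul_sub, smul_sub]; abel
    rw [dist_eq_norm, h3, norm_smul, Real.norm_eq_abs, abs_of_nonneg (by linarith),
      ← dist_eq_norm]
  have htri : dist x (p + φ • (b - p)) ≤ dist x b + (1 - φ) * dist p b := by
    calc dist x (p + φ • (b - p)) ≤ dist x b + dist b (p + φ • (b - p)) := dist_triangle _ _ _
    _ = dist x b + (1 - φ) * dist p b := by rw [dist_comm b, hkey]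
  nlinarith [mul_le_mul_of_nonneg_left hpb (show (0:ℝ) ≤ 1 - φ by linarith),
    mul_le_mul_of_nonneg_left hrbC (show (0:ℝ) ≤ 1 - φ by linarith)]

lemma pρ_nonneg {ra rb C A1 A2 d t : ℝ} (hd : 0 < d) (h12 : A1 ≤ A2) (h0a : 0 ≤ ra)
    (h0b : 0 ≤ rb) (hC : 0 ≤ C) : 0 ≤ pρ ra rb C A1 A2 d t := by
  have h21 : cl A2 d t ≤ cl A1 d t := cl_le_cl hd h12
  have e1 : pρ ra rb C A1 A2 d t
      = (1 - cl A1 d t)*ra + (cl A1 d t - cl A2 d t)*(2*C) + cl A2 d t * rb := by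
    rw [pρ]; ring
  rw [e1]
  have := cl_nonneg A1 d t
  have := cl_nonneg A2 d t
  have := cl_le_one A1 d t
  have := cl_le_one A2 d t
  have t1 : 0 ≤ (1 - cl A1 d t)*ra := mul_nonneg (by linarith) h0a
  have t2 : 0 ≤ (cl A1 d t - cl A2 d t)*(2*C) := mul_nonneg (by linarith) (by linarith)
  have t3 : 0 ≤ cl A2 d t * rb := mul_nonneg (by linarith) h0b
  linarith

lemma pρ_le {ra rb C A1 A2 d t : ℝ} (hd : 0 < d) (h12 : A1 ≤ A2) (hraC : ra ≤ C)
    (hrbC : rb ≤ C) (hC : 0 ≤ C) : pρ ra rb C A1 A2 d t ≤ 2*C := by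
  have h21 : cl A2 d t ≤ cl A1 d t := cl_le_cl hd h12
  have e1 : pρ ra rb C A1 A2 d t
      = (1 - cl A1 d t)*ra + (cl A1 d t - cl A2 d t)*(2*C) + cl A2 d t * rb := by
    rw [pρ]; ring
  rw [e1]
  have h10 := cl_nonneg A1 d t
  have h20 := cl_nonneg A2 d t
  have h11 := cl_le_one A1 d t
  have h21' := cl_le_one A2 d t
  nlinarith [mul_le_mul_of_nonneg_left (show ra ≤ 2*C by linarith)
      (show (0:ℝ) ≤ 1 - cl A1 d t by linarith),
    mul_le_mul_of_nonneg_left (show rb ≤ 2*C by linarith) h20]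

lemma pγ_zero {a p b : ℝ × ℝ} {A1 A2 d : ℝ} (hd : 0 < d) (h1 : 0 ≤ A1) (h2 : 0 ≤ A2) :
    pγ a p b A1 A2 d 0 = a := by
  rw [pγ, cl_eq_zero hd h1, cl_eq_zero hd h2, zero_smul, zero_smul, add_zero, add_zero]

lemma pρ_zero {ra rb C A1 A2 d : ℝ} (hd : 0 < d) (h1 : 0 ≤ A1) (h2 : 0 ≤ A2) :
    pρ ra rb C A1 A2 d 0 = ra := by
  rw [pρ, cl_eq_zero hd h1, cl_eq_zero hd h2, zero_mul, zero_mul, add_zero, add_zero]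

lemma pγ_one {a p b : ℝ × ℝ} {A1 A2 d : ℝ} (hd : 0 < d) (h1 : A1 + d ≤ 1) (h2 : A2 + d ≤ 1) :
    pγ a p b A1 A2 d 1 = b := by
  rw [pγ, cl_eq_one hd h1, cl_eq_one hd h2, one_smul, one_smul]; abel

lemma pρ_one {ra rb C A1 A2 d : ℝ} (hd : 0 < d) (h1 : A1 + d ≤ 1) (h2 : A2 + d ≤ 1) :
    pρ ra rb C A1 A2 d 1 = rb := by
  rw [pρ, cl_eq_one hd h1, cl_eq_one hd h2, one_mul, one_mul]; ring

/-! ### free paths -/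

noncomputable def fγ (a b : ℝ × ℝ) (A d t : ℝ) : ℝ × ℝ := a + cl A d t • (b - a)

noncomputable def fρ (ra rb A1 A2 d t : ℝ) : ℝ :=
  (1 - cl A1 d t) * ra + cl A2 d t * rb

lemma fγ_continuous (a b : ℝ × ℝ) (A d : ℝ) : Continuous (fun t => fγ a b A d t) := by
  unfold fγ
  exact continuous_const.add ((cl_continuous A d).smul continuous_const)

lemma fρ_continuous (ra rb A1 A2 d : ℝ) : Continuous (fun t => fρ ra rb A1 A2 d t) := by
  unfold fρ
  exact ((continuous_const.sub (cl_continuous A1 d)).mul continuous_const).add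
    ((cl_continuous A2 d).mul continuous_const)

lemma fγ_left {a b : ℝ × ℝ} {A d t : ℝ} (hd : 0 < d) (h : t ≤ A) : fγ a b A d t = a := by
  rw [fγ, cl_eq_zero hd h, zero_smul, add_zero]

lemma fγ_right {a b : ℝ × ℝ} {A d t : ℝ} (hd : 0 < d) (h : A + d ≤ t) : fγ a b A d t = b := by
  rw [fγ, cl_eq_one hd h, one_smul]; abel

lemma fρ_left {ra rb A1 A2 d t : ℝ} (hd : 0 < d) (h1 : t ≤ A1) (h2 : t ≤ A2) :
    fρ ra rb A1 A2 d t = ra := by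
  rw [fρ, cl_eq_zero hd h1, cl_eq_zero hd h2]; ring

lemma fρ_right {ra rb A1 A2 d t : ℝ} (hd : 0 < d) (h1 : A1 + d ≤ t) (h2 : A2 + d ≤ t) :
    fρ ra rb A1 A2 d t = rb := by
  rw [fρ, cl_eq_one hd h1, cl_eq_one hd h2]; ring

lemma fρ_nonneg {ra rb A1 A2 d t : ℝ} (h0a : 0 ≤ ra) (h0b : 0 ≤ rb) :
    0 ≤ fρ ra rb A1 A2 d t := by
  have h11 := cl_le_one A1 d t
  have h20 := cl_nonneg A2 d t
  exact add_nonneg (mul_nonneg (by linarith) h0a) (mul_nonneg h20 h0b)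

lemma fρ_le {ra rb C A1 A2 d t : ℝ} (h0a : 0 ≤ ra) (h0b : 0 ≤ rb) (hraC : ra ≤ C)
    (hrbC : rb ≤ C) : fρ ra rb A1 A2 d t ≤ 2*C := by
  have h10 := cl_nonneg A1 d t
  have h11 := cl_le_one A1 d t
  have h20 := cl_nonneg A2 d t
  have h21 := cl_le_one A2 d t
  rw [fρ]
  nlinarith [mul_nonneg h10 h0a, mul_le_mul_of_nonneg_right h21 h0b]

lemma cases_injective {m k : ℕ} (i : Fin k) (e : Fin m → Fin k) (he : Function.Injective e)
    (hne : ∀ s, e s ≠ i) : Function.Injective (Fin.cases i e : Fin (m+1) → Fin k) := by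
  intro a b hab
  cases a using Fin.cases with
  | zero =>
    cases b using Fin.cases with
    | zero => rfl
    | succ b =>
      simp only [Fin.cases_zero, Fin.cases_succ] at hab
      exact absurd hab.symm (hne b)
  | succ a =>
    cases b using Fin.cases with
    | zero =>
      simp only [Fin.cases_zero, Fin.cases_succ] at hab
      exact absurd hab (hne a)
    | succ b =>
      simp only [Fin.cases_succ] at hab
      rw [he hab]

lemma exists_perm {k : ℕ} : ∀ {m : ℕ} (e f : Fin m → Fin k), Function.Injective e →
    Function.Injective f → ∃ σ : Equiv.Perm (Fin k), ∀ s, σ (e s) = f s := by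
  intro m
  induction m with
  | zero => exact fun e f _ _ => ⟨1, fun s => s.elim0⟩
  | succ n ih =>
    intro e f he hf
    obtain ⟨σ', hσ'⟩ := ih (fun s => e s.succ) (fun s => f s.succ)
      (fun a b hab => Fin.succ_injective _ (he hab))
      (fun a b hab => Fin.succ_injective _ (hf hab))
    refine ⟨σ'.trans (Equiv.swap (σ' (e 0)) (f 0)), ?_⟩
    intro s
    cases s using Fin.cases with
    | zero => simp [Equiv.swap_apply_left]
    | succ s =>
      have h1 : σ' (e s.succ) = f s.succ := hσ' s
      simp only [Equiv.trans_apply, h1]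
      apply Equiv.swap_apply_of_ne_of_ne
      · intro hh
        rw [← h1] at hh
        exact (Fin.succ_ne_zero s) (he (σ'.injective hh))
      · exact fun hh => (Fin.succ_ne_zero s) (hf hh)

lemma selection {k : ℕ} (c0 c1 : Fin k → ℝ × ℝ) (r0 r1 : Fin k → ℝ) :
    ∀ (n : ℕ) (I J : Finset (Fin k)) (P : Set (ℝ × ℝ)),
      I.card ≤ n → I.card = J.card →
      (P ⊆ ⋃ i ∈ I, closedBall (c0 i) (r0 i)) →
      (P ⊆ ⋃ j ∈ J, closedBall (c1 j) (r1 j)) →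
      ∃ (m : ℕ) (e f : Fin m → Fin k) (q : Fin m → ℝ × ℝ),
        Function.Injective e ∧ Function.Injective f ∧
        (∀ s, e s ∈ I) ∧ (∀ s, f s ∈ J) ∧
        (∀ s, dist (q s) (c0 (e s)) ≤ r0 (e s)) ∧
        (∀ s, dist (q s) (c1 (f s)) ≤ r1 (f s)) ∧
        (∀ x ∈ P, ∃ s, x ∈ closedBall (c0 (e s)) (r0 (e s)) ∪ closedBall (c1 (f s)) (r1 (f s))) := by
  intro n
  induction n with
  | zero =>
    intro I J P hn hIJ hR hB
    have hI : I = ∅ := Finset.card_eq_zero.mp (Nat.le_zero.mp hn)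
    refine ⟨0, Fin.elim0, Fin.elim0, Fin.elim0, (by intro a; exact a.elim0), (by intro a; exact a.elim0),
      fun a => a.elim0, fun a => a.elim0, fun a => a.elim0, fun a => a.elim0, fun x hx => ?_⟩
    rcases Set.mem_iUnion₂.mp (hR hx) with ⟨i, hi, _⟩
    simp [hI] at hi
  | succ n ih =>
    intro I J P hn hIJ hR hB
    by_cases hP : P = ∅
    · refine ⟨0, Fin.elim0, Fin.elim0, Fin.elim0, (by intro a; exact a.elim0), (by intro a; exact a.elim0),
        fun a => a.elim0, fun a => a.elim0, fun a => a.elim0, fun a => a.elim0, fun x hx => ?_⟩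
      rw [hP] at hx
      exact absurd hx (Set.notMem_empty x)
    · obtain ⟨x0, hx0⟩ := Set.nonempty_iff_ne_empty.mpr hP
      rcases Set.mem_iUnion₂.mp (hR hx0) with ⟨i, hiI, hxi⟩
      rcases Set.mem_iUnion₂.mp (hB hx0) with ⟨j, hjJ, hxj⟩
      have hR' : P \ (closedBall (c0 i) (r0 i) ∪ closedBall (c1 j) (r1 j)) ⊆
          ⋃ i' ∈ I.erase i, closedBall (c0 i') (r0 i') := by
        rintro y ⟨hyP, hyn⟩
        rcases Set.mem_iUnion₂.mp (hR hyP) with ⟨i', hi', hyi'⟩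
        have hne : i' ≠ i := by rintro rfl; exact hyn (Or.inl hyi')
        exact Set.mem_iUnion₂.mpr ⟨i', Finset.mem_erase.mpr ⟨hne, hi'⟩, hyi'⟩
      have hB' : P \ (closedBall (c0 i) (r0 i) ∪ closedBall (c1 j) (r1 j)) ⊆
          ⋃ j' ∈ J.erase j, closedBall (c1 j') (r1 j') := by
        rintro y ⟨hyP, hyn⟩
        rcases Set.mem_iUnion₂.mp (hB hyP) with ⟨j', hj', hyj'⟩
        have hne : j' ≠ j := by rintro rfl; exact hyn (Or.inr hyj')
        exact Set.mem_iUnion₂.mpr ⟨j', Finset.mem_erase.mpr ⟨hne, hj'⟩, hyj'⟩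
      have hcard : (I.erase i).card ≤ n := by
        rw [Finset.card_erase_of_mem hiI]
        omega
      have hIJ' : (I.erase i).card = (J.erase j).card := by
        rw [Finset.card_erase_of_mem hiI, Finset.card_erase_of_mem hjJ, hIJ]
      obtain ⟨m, e, f, q, he, hf, heI, hfJ, hq0, hq1, hcov⟩ :=
        ih (I.erase i) (J.erase j) _ hcard hIJ' hR' hB'
      refine ⟨m+1, Fin.cases i e, Fin.cases j f, Fin.cases x0 q, ?_, ?_, ?_, ?_, ?_, ?_, ?_⟩
      · exact cases_injective i e he (fun s => (Finset.mem_erase.mp (heI s)).1)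
      · exact cases_injective j f hf (fun s => (Finset.mem_erase.mp (hfJ s)).1)
      · intro s
        cases s using Fin.cases with
        | zero => simpa using hiI
        | succ s => simpa using (Finset.mem_erase.mp (heI s)).2
      · intro s
        cases s using Fin.cases with
        | zero => simpa using hjJ
        | succ s => simpa using (Finset.mem_erase.mp (hfJ s)).2
      · intro s
        cases s using Fin.cases with
        | zero => simpa using mem_closedBall.mp hxi
        | succ s => simpa using hq0 s
      · intro s
        cases s using Fin.cases with
        | zero => simpa using mem_closedBall.mp hxj
        | succ s => simpa using hq1 s
      · intro y hy
        by_cases hy2 : y ∈ closedBall (c0 i) (r0 i) ∪ closedBall (c1 j) (r1 j)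
        · exact ⟨0, by simpa using hy2⟩
        · obtain ⟨s, hs⟩ := hcov y ⟨hy, hy2⟩
          exact ⟨s.succ, by simpa using hs⟩

end MorphAux

theorem minmax_rectilinear_morph_factor_two
    (k : ℕ) (hk : 2 ≤ k) (P : Set (ℝ × ℝ)) (hP : P.Finite) (C : ℝ) (hC : 0 ≤ C)
    (c0 c1 : Fin k → ℝ × ℝ) (r0 r1 : Fin k → ℝ)
    (hr0 : ∀ i, 0 ≤ r0 i) (hr1 : ∀ i, 0 ≤ r1 i)
    (h0 : P ⊆ ⋃ i, Metric.closedBall (c0 i) (r0 i))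
    (h1 : P ⊆ ⋃ i, Metric.closedBall (c1 i) (r1 i))
    (hb0 : ∀ i, r0 i ≤ C) (hb1 : ∀ i, r1 i ≤ C) :
    ∃ γ ρ, IsMorph k P c0 c1 r0 r1 γ ρ ∧
      ∀ i, ∀ t ∈ Set.Icc (0:ℝ) 1, ρ i t ≤ 2 * C := by
  classical
  obtain ⟨m, e, f, q, he, hf, -, -, hq0, hq1, hcov⟩ :=
    MorphAux.selection c0 c1 r0 r1 k Finset.univ Finset.univ P (by simp) rfl
      (by simpa using h0) (by simpa using h1)
  obtain ⟨σ, hσ⟩ := MorphAux.exists_perm e f he hf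
  set δ : ℝ := 1 / (2*(m:ℝ) + 2) with hδdef
  have h2m : (2*(m:ℝ)+2) ≠ 0 := by positivity
  have hδ : 0 < δ := by rw [hδdef]; positivity
  have hδ2 : 0 < δ/2 := by linarith
  have hkey : 2*((m:ℝ)*δ) + 2*δ = 1 := by
    rw [hδdef]; field_simp
  have hm0 : 0 ≤ (m:ℝ) := Nat.cast_nonneg m
  have hmδ0 : 0 ≤ (m:ℝ)*δ := by positivity
  have hhalf : (m:ℝ)*δ + δ = 1/2 := by linarith
  have hms : ∀ s : Fin m, ((s : ℕ) : ℝ) + 1 ≤ (m : ℝ) := by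
    intro s
    exact_mod_cast Nat.succ_le_of_lt s.isLt
  set A1 : Fin m → ℝ := fun s => ((s : ℕ) : ℝ) * δ with hA1def
  set A2 : Fin m → ℝ := fun s => 1 - (((s : ℕ) : ℝ) + 1) * δ with hA2def
  have hA1m : ∀ s, A1 s + δ ≤ (m:ℝ)*δ := by
    intro s
    have h := mul_le_mul_of_nonneg_right (hms s) hδ.le
    simp only [hA1def]
    nlinarith
  have hA2m : ∀ s, 1 - (m:ℝ)*δ ≤ A2 s := by
    intro s
    have h := mul_le_mul_of_nonneg_right (hms s) hδ.le
    simp only [hA2def]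
    nlinarith
  have h0A1 : ∀ s, 0 ≤ A1 s := by
    intro s; simp only [hA1def]; positivity
  have h0A2 : ∀ s, 0 ≤ A2 s := by
    intro s; have := hA2m s; linarith
  have hA12 : ∀ s, A1 s ≤ A2 s := by
    intro s; have h1' := hA1m s; have h2' := hA2m s; linarith
  have hA1d1 : ∀ s, A1 s + δ ≤ 1 := by
    intro s; have := hA1m s; linarith
  have hA2d1 : ∀ s, A2 s + δ ≤ 1 := by
    intro s
    have h' := h0A1 s
    simp only [hA1def] at h'
    simp only [hA2def]
    linarith
  set γ : Fin k → ℝ → ℝ × ℝ := fun i => if h : ∃ s, e s = i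
      then fun t => MorphAux.pγ (c0 i) (q h.choose) (c1 (f h.choose)) (A1 h.choose) (A2 h.choose) δ t
      else fun t => MorphAux.fγ (c0 i) (c1 (σ i)) (1/2 - δ/2) δ t
    with hγdef
  set ρ : Fin k → ℝ → ℝ := fun i => if h : ∃ s, e s = i
      then fun t => MorphAux.pρ (r0 i) (r1 (f h.choose)) C (A1 h.choose) (A2 h.choose) δ t
      else fun t => MorphAux.fρ (r0 i) (r1 (σ i)) ((m:ℝ)*δ) (1/2 + δ/2) (δ/2) t
    with hρdef
  have hps : ∀ s : Fin m,
      γ (e s) = (fun t => MorphAux.pγ (c0 (e s)) (q s) (c1 (f s)) (A1 s) (A2 s) δ t) ∧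
      ρ (e s) = (fun t => MorphAux.pρ (r0 (e s)) (r1 (f s)) C (A1 s) (A2 s) δ t) := by
    intro s
    have hex : ∃ s', e s' = e s := ⟨s, rfl⟩
    have hch : hex.choose = s := he hex.choose_spec
    constructor
    · simp only [hγdef]
      rw [dif_pos hex, hch]
    · simp only [hρdef]
      rw [dif_pos hex, hch]
  have hfs : ∀ i, (¬ ∃ s, e s = i) →
      γ i = (fun t => MorphAux.fγ (c0 i) (c1 (σ i)) (1/2 - δ/2) δ t) ∧
      ρ i = (fun t => MorphAux.fρ (r0 i) (r1 (σ i)) ((m:ℝ)*δ) (1/2 + δ/2) (δ/2) t) := by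
    intro i h
    constructor
    · simp only [hγdef]; rw [dif_neg h]
    · simp only [hρdef]; rw [dif_neg h]
  have hcont : ∀ i, Continuous (γ i) ∧ Continuous (ρ i) := by
    intro i
    by_cases h : ∃ s, e s = i
    · obtain ⟨s, rfl⟩ := h
      rw [(hps s).1, (hps s).2]
      exact ⟨MorphAux.pγ_continuous _ _ _ _ _ _, MorphAux.pρ_continuous _ _ _ _ _ _⟩
    · rw [(hfs i h).1, (hfs i h).2]
      exact ⟨MorphAux.fγ_continuous _ _ _ _, MorphAux.fρ_continuous _ _ _ _ _⟩
  have hρ0 : ∀ i t, 0 ≤ ρ i t := by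
    intro i t
    by_cases h : ∃ s, e s = i
    · obtain ⟨s, rfl⟩ := h
      rw [(hps s).2]
      exact MorphAux.pρ_nonneg hδ (hA12 s) (hr0 _) (hr1 _) hC
    · rw [(hfs i h).2]
      exact MorphAux.fρ_nonneg (hr0 _) (hr1 _)
  have hρ2C : ∀ i t, ρ i t ≤ 2*C := by
    intro i t
    by_cases h : ∃ s, e s = i
    · obtain ⟨s, rfl⟩ := h
      rw [(hps s).2]
      exact MorphAux.pρ_le hδ (hA12 s) (hb0 _) (hb1 _) hC
    · rw [(hfs i h).2]
      exact MorphAux.fρ_le (hr0 _) (hr1 _) (hb0 _) (hb1 _)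
  have hγinit : ∀ i, γ i 0 = c0 i ∧ ρ i 0 = r0 i := by
    intro i
    by_cases h : ∃ s, e s = i
    · obtain ⟨s, rfl⟩ := h
      rw [(hps s).1, (hps s).2]
      exact ⟨MorphAux.pγ_zero hδ (h0A1 s) (h0A2 s), MorphAux.pρ_zero hδ (h0A1 s) (h0A2 s)⟩
    · rw [(hfs i h).1, (hfs i h).2]
      constructor
      · exact MorphAux.fγ_left hδ (by linarith)
      · exact MorphAux.fρ_left hδ2 (by linarith) (by linarith)
  have hγfin : ∀ i, γ i 1 = c1 (σ i) ∧ ρ i 1 = r1 (σ i) := by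
    intro i
    by_cases h : ∃ s, e s = i
    · obtain ⟨s, rfl⟩ := h
      rw [(hps s).1, (hps s).2, hσ s]
      exact ⟨MorphAux.pγ_one hδ (hA1d1 s) (hA2d1 s), MorphAux.pρ_one hδ (hA1d1 s) (hA2d1 s)⟩
    · rw [(hfs i h).1, (hfs i h).2]
      constructor
      · exact MorphAux.fγ_right hδ (by linarith)
      · exact MorphAux.fρ_right hδ2 (by linarith) (by linarith)
  have hcover : ∀ t : ℝ, ∀ x ∈ P, ∃ i, x ∈ closedBall (γ i t) (ρ i t) := by
    intro t x hx
    by_cases hA : ∃ s, x ∈ closedBall (c0 (e s)) (r0 (e s))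
    · obtain ⟨s, hs⟩ := hA
      rcases le_or_gt t (A2 s) with h | h
      · refine ⟨e s, ?_⟩
        rw [(hps s).1, (hps s).2]
        exact MorphAux.covR hδ (hq0 s) (hb0 _) h hs
      · by_cases hB2 : ∃ s', x ∈ closedBall (c1 (f s')) (r1 (f s'))
        · obtain ⟨s', hs'⟩ := hB2
          refine ⟨e s', ?_⟩
          rw [(hps s').1, (hps s').2]
          refine MorphAux.covB hδ (hq1 s') (hb1 _) ?_ hs'
          have h1' := hA1m s'
          have h2' := hA2m s
          linarith
        · obtain ⟨j, hj⟩ := Set.mem_iUnion.mp (h1 hx)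
          have hjf : ¬ ∃ s', e s' = σ.symm j := by
            rintro ⟨s', hs'⟩
            apply hB2
            refine ⟨s', ?_⟩
            have hfj : f s' = j := by
              rw [← hσ s', hs', Equiv.apply_symm_apply]
            rw [hfj]
            exact hj
          refine ⟨σ.symm j, ?_⟩
          rw [(hfs _ hjf).1, (hfs _ hjf).2]
          have h2' := hA2m s
          have ht1 : (1:ℝ)/2 - δ/2 + δ ≤ t := by linarith
          have ht2 : (m:ℝ)*δ + δ/2 ≤ t := by linarith
          have ht3 : (1:ℝ)/2 + δ/2 + δ/2 ≤ t := by linarith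
          simp only [MorphAux.fγ_right hδ ht1, MorphAux.fρ_right hδ2 ht2 ht3,
            Equiv.apply_symm_apply]
          exact hj
    · obtain ⟨i, hi⟩ := Set.mem_iUnion.mp (h0 hx)
      have hif : ¬ ∃ s, e s = i := by
        rintro ⟨s, rfl⟩
        exact hA ⟨s, hi⟩
      by_cases hB2 : ∃ s', x ∈ closedBall (c1 (f s')) (r1 (f s'))
      · obtain ⟨s', hs'⟩ := hB2
        rcases le_or_gt t ((m:ℝ)*δ) with h | h
        · refine ⟨i, ?_⟩
          rw [(hfs i hif).1, (hfs i hif).2]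
          simp only [MorphAux.fγ_left hδ (by linarith : t ≤ 1/2 - δ/2),
            MorphAux.fρ_left hδ2 h (by linarith : t ≤ 1/2 + δ/2)]
          exact hi
        · refine ⟨e s', ?_⟩
          rw [(hps s').1, (hps s').2]
          refine MorphAux.covB hδ (hq1 s') (hb1 _) ?_ hs'
          have := hA1m s'
          linarith
      · obtain ⟨s, hs⟩ := hcov x hx
        rcases hs with h | h
        · exact absurd ⟨s, h⟩ hA
        · exact absurd ⟨s, h⟩ hB2
  refine ⟨γ, ρ, ⟨fun i => (hcont i).1.continuousOn, fun i => (hcont i).2.continuousOn,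
    fun i t _ => hρ0 i t, fun i => (hγinit i).1, fun i => (hγinit i).2,
    ⟨σ, fun i => (hγfin i).1, fun i => (hγfin i).2⟩,
    fun t _ x hx => Set.mem_iUnion.mpr (hcover t x hx)⟩,
    fun i t _ => hρ2C i t⟩
end
end

section
/- Let E = EuclideanSpace ℝ (Fin 2), let P ⊆ E be a finite point set, let k ≥ 2, and let C ≥ 0. Let R = (c⁰, r⁰) and B = (c¹, r¹) be two configurations of k disks, each covering P, with ∑ i, r⁰ i ≤ C and ∑ i, r¹ i ≤ C. Then there exists a continuous morph (γ, ρ) on [0,1] from R to B covering P such that ∑ i, ρ i t ≤ 2C for all t ∈ [0,1]. (Hence the topological stability ratio of the minsum Euclidean k-center problem is at most 2; the proof uses only the triangle inequality and therefore also applies in the rectilinear L∞ metric.) -/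
open Metric Set Real Pointwise

noncomputable section

namespace MorphAux



lemma exists_dup_split {α : Type*} : ∀ {l : List α}, ¬ l.Nodup →
    ∃ (l1 l3 : List α) (a : α) (l2 : List α), l = l1 ++ a :: (l2 ++ a :: l3) := by
  intro l
  induction l with
  | nil => simp
  | cons b rest ih =>
    intro h
    by_cases hb : b ∈ rest
    · obtain ⟨s, t, rfl⟩ := List.append_of_mem hb
      exact ⟨[], t, b, s, by simp⟩
    · have : ¬ rest.Nodup := fun hn => h (List.nodup_cons.mpr ⟨hb, hn⟩)
      obtain ⟨l1, l3, a, l2, rfl⟩ := ih this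
      exact ⟨b :: l1, l3, a, l2, by simp⟩

lemma schedule_exists (k : ℕ) (Rel : Fin k → Fin k → Prop) :
    ∃ (σ : Equiv.Perm (Fin k)) (s e : Fin k → ℕ),
      (∀ i, e i ≤ k) ∧
      (∀ i, Rel i (σ i) → e i = s i) ∧
      (∀ i, ¬ Rel i (σ i) → e i = s i + 1) ∧
      (∀ i j, Rel i j → e (σ.symm j) ≤ s i) := by
  classical
  obtain ⟨σ, -, hσ⟩ := Finset.exists_max_image (Finset.univ : Finset (Equiv.Perm (Fin k)))
    (fun σ => (Finset.univ.filter (fun i => Rel i (σ i))).card) ⟨1, Finset.mem_univ 1⟩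
  set Arc : Fin k → Fin k → Prop := fun m i => Rel i (σ m) with hArcdef
  have no_return : ∀ i m, ¬ Rel i (σ i) → Arc m i → Relation.ReflTransGen Arc i m → False := by
    intro i m hu harc hreach
    have hex : ∃ n, ∃ L : List (Fin k), (L.head? = some i ∧ List.Chain' Arc (L ++ [i]))
        ∧ L.length = n := by
      obtain ⟨l0, hchain0, hlast0⟩ := List.exists_isChain_cons_of_relationReflTransGen hreach
      refine ⟨(i :: l0).length, i :: l0, ⟨rfl, ?_⟩, rfl⟩
      have h1 : List.Chain' Arc (i :: l0) := hchain0
      apply List.IsChain.append h1 (List.isChain_singleton i)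
      intro x hx y hy
      simp only [List.head?_cons, Option.mem_def, Option.some.injEq] at hy
      subst hy
      have hxm : m = x := by
        have hgl := List.getLast?_eq_getLast_of_ne_nil (l := i :: l0) (List.cons_ne_nil _ _)
        rw [hgl, hlast0] at hx
        simpa using hx
      rw [← hxm]
      exact harc
    obtain ⟨L, hL, hlen⟩ := Nat.find_spec hex
    have hmin : ∀ L' : List (Fin k), (L'.head? = some i ∧ List.Chain' Arc (L' ++ [i])) →
        Nat.find hex ≤ L'.length := fun L' h => Nat.find_min' hex ⟨L', h, rfl⟩
    obtain ⟨hhead, hchain⟩ := hL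
    -- L is nodup
    have hnodup : L.Nodup := by
      by_contra hnd
      obtain ⟨l1, l3, a, l2, hsplit⟩ := exists_dup_split hnd
      have hgood' : ((l1 ++ a :: l3).head? = some i ∧
          List.Chain' Arc ((l1 ++ a :: l3) ++ [i])) := by
        constructor
        · rw [hsplit] at hhead
          cases l1 with
          | nil => simpa using hhead
          | cons x xs => simpa using hhead
        · rw [hsplit] at hchain
          have hc1 : List.Chain' Arc (l1 ++ a :: (l2 ++ a :: (l3 ++ [i]))) := by
            simpa using hchain
          unfold List.Chain' at hc1; rw [List.isChain_split] at hc1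
          have hc2 : List.Chain' Arc ((a :: l2) ++ a :: (l3 ++ [i])) := by
            unfold List.Chain'; simpa using hc1.2
          unfold List.Chain' at hc2; rw [List.isChain_split] at hc2
          have : List.Chain' Arc (l1 ++ a :: (l3 ++ [i])) :=
            List.isChain_split.mpr ⟨hc1.1, hc2.2⟩
          simpa using this
      have h1 := hmin _ hgood'
      rw [← hlen, hsplit] at h1
      simp only [List.length_append, List.length_cons] at h1
      omega
    obtain ⟨T, rfl⟩ : ∃ T, L = i :: T := by
      cases L with
      | nil => simp at hhead
      | cons x xs =>
        have : x = i := by simpa using hhead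
        exact ⟨xs, by rw [this]⟩
    have hil : i ∈ i :: T := List.mem_cons_self
    clear hmin hlen hex
    have hlen1 : ((i :: T) ++ [i]).length = (i :: T).length + 1 := by simp
    -- chain fact with indices
    have hchainfact : ∀ (n : ℕ) (hn : n < (i :: T).length),
        Rel ((i :: T)[(n+1) % (i :: T).length]'(Nat.mod_lt _ (by omega)))
          (σ ((i :: T)[n]'hn)) := by
      intro n hn
      have hcf := List.isChain_iff_getElem.mp hchain
      have h1 : n + 1 < ((i :: T) ++ [i]).length := by omega
      have harcn : Arc (((i :: T) ++ [i])[n]'(by omega)) (((i :: T) ++ [i])[n+1]'(by omega)) :=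
        hcf n h1
      rw [List.getElem_append_left hn] at harcn
      by_cases hcase : n + 1 < (i :: T).length
      · rw [List.getElem_append_left hcase] at harcn
        have hmm : (n+1) % (i :: T).length = n + 1 := Nat.mod_eq_of_lt hcase
        simp only [hmm]
        exact harcn
      · have hn1 : n + 1 = (i :: T).length := by omega
        have hmod : (n+1) % (i :: T).length = 0 := by rw [hn1]; exact Nat.mod_self _
        rw [List.getElem_append_right (by omega)] at harcn
        simp only [hmod, List.getElem_cons_zero]
        have hlast : ([i] : List (Fin k))[n + 1 - (i :: T).length]'(by simp only [List.length_singleton]; omega) = i := by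
          simp
        rw [hlast] at harcn
        exact harcn
    -- rotation
    set ζ := (i :: T).formPerm with hζ
    set σ' := σ * ζ⁻¹ with hσ'
    have hfix : ∀ x, x ∉ i :: T → σ' x = σ x := by
      intro x hx
      have h1 : ζ x = x := List.formPerm_apply_of_notMem hx
      have h2 : ζ⁻¹ x = x := by
        apply Equiv.Perm.inv_eq_iff_eq.mpr
        exact h1.symm
      simp [hσ', Equiv.Perm.mul_apply, h2]
    have hmem : ∀ x ∈ i :: T, Rel x (σ' x) := by
      intro x hx
      have hζw : ζ (ζ⁻¹ x) = x := by simp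
      have hwL : ζ⁻¹ x ∈ i :: T := by
        by_contra hwn
        have h3 : ζ (ζ⁻¹ x) = ζ⁻¹ x := List.formPerm_apply_of_notMem hwn
        rw [hζw] at h3
        rw [h3] at hx
        exact hwn hx
      obtain ⟨n, hn, hget⟩ := List.mem_iff_getElem.mp hwL
      have hx' : x = (i :: T)[(n+1) % (i :: T).length]'(Nat.mod_lt _ (by omega)) := by
        rw [← hζw]
        conv_lhs => rw [← hget]
        exact List.formPerm_apply_getElem _ hnodup n hn
      have hσ'x : σ' x = σ (ζ⁻¹ x) := by
        simp [hσ', Equiv.Perm.mul_apply]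
      rw [hσ'x, ← hget, hx']
      exact hchainfact n hn
    -- score increase
    have hsub : insert i (Finset.univ.filter (fun x => Rel x (σ x))) ⊆
        Finset.univ.filter (fun x => Rel x (σ' x)) := by
      intro x hx
      rcases Finset.mem_insert.mp hx with rfl | hx'
      · exact Finset.mem_filter.mpr ⟨Finset.mem_univ _, hmem _ hil⟩
      · by_cases hxL : x ∈ i :: T
        · exact Finset.mem_filter.mpr ⟨Finset.mem_univ _, hmem _ hxL⟩
        · have := (Finset.mem_filter.mp hx').2
          exact Finset.mem_filter.mpr ⟨Finset.mem_univ _, (hfix x hxL) ▸ this⟩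
    have hnotin : i ∉ Finset.univ.filter (fun x => Rel x (σ x)) := by
      simp [hu]
    have hcard : (Finset.univ.filter (fun x => Rel x (σ x))).card + 1 ≤
        (Finset.univ.filter (fun x => Rel x (σ' x))).card := by
      calc (Finset.univ.filter (fun x => Rel x (σ x))).card + 1
          = (insert i (Finset.univ.filter (fun x => Rel x (σ x)))).card :=
            (Finset.card_insert_of_notMem hnotin).symm
        _ ≤ _ := Finset.card_le_card hsub
    have := hσ σ' (Finset.mem_univ _)
    omega
  -- the level functions
  refine ⟨σ, fun i => (Finset.univ.filter (fun m => ¬ Rel m (σ m) ∧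
      Relation.ReflTransGen Arc m i ∧ m ≠ i)).card,
    fun i => (Finset.univ.filter (fun m => ¬ Rel m (σ m) ∧
      Relation.ReflTransGen Arc m i)).card, ?_, ?_, ?_, ?_⟩
  · intro i
    try dsimp only
    calc _ ≤ (Finset.univ : Finset (Fin k)).card := Finset.card_filter_le _ _
      _ = k := by simp
  · intro i hi
    try dsimp only
    congr 1
    apply Finset.filter_congr
    intro m _
    constructor
    · rintro ⟨h1, h2⟩
      refine ⟨h1, h2, ?_⟩
      rintro rfl
      exact h1 hi
    · rintro ⟨h1, h2, _⟩
      exact ⟨h1, h2⟩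
  · intro i hi
    try dsimp only
    have heq : (Finset.univ.filter (fun m => ¬ Rel m (σ m) ∧
        Relation.ReflTransGen Arc m i)) =
        insert i (Finset.univ.filter (fun m => ¬ Rel m (σ m) ∧
        Relation.ReflTransGen Arc m i ∧ m ≠ i)) := by
      ext m
      simp only [Finset.mem_filter, Finset.mem_univ, true_and, Finset.mem_insert]
      constructor
      · rintro ⟨h1, h2⟩
        by_cases hmi : m = i
        · exact Or.inl hmi
        · exact Or.inr ⟨h1, h2, hmi⟩
      · rintro (rfl | ⟨h1, h2, _⟩)
        · exact ⟨hi, Relation.ReflTransGen.refl⟩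
        · exact ⟨h1, h2⟩
    rw [heq, Finset.card_insert_of_notMem (by simp)]
  · intro i j hij
    try dsimp only
    have harc' : Arc (σ.symm j) i := by
      show Rel i (σ (σ.symm j))
      rw [Equiv.apply_symm_apply]
      exact hij
    apply Finset.card_le_card
    intro m hm
    obtain ⟨-, h1, h2⟩ := Finset.mem_filter.mp hm
    refine Finset.mem_filter.mpr ⟨Finset.mem_univ _, h1, h2.tail harc', ?_⟩
    rintro rfl
    exact no_return m (σ.symm j) h1 harc' h2




noncomputable section

variable {V : Type*} [NormedAddCommGroup V] [NormedSpace ℝ V]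

/-- Affine interpolation from `X` at time `α` to `Y` at time `β`. -/
def seg (α β : ℝ) (X Y : V) (t : ℝ) : V := X + ((t - α)/(β - α)) • (Y - X)

lemma seg_left (α β : ℝ) (X Y : V) : seg α β X Y α = X := by simp [seg]

lemma seg_right {α β : ℝ} (h : α ≠ β) (X Y : V) : seg α β X Y β = Y := by
  have hne : β - α ≠ 0 := sub_ne_zero.mpr (Ne.symm h)
  simp [seg, div_self hne]

lemma seg_continuous (α β : ℝ) (X Y : V) : Continuous (seg α β X Y) := by
  unfold seg
  fun_prop

lemma seg_repr {α β : ℝ} (hab : α < β) (X Y : V) (t : ℝ) :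
    seg α β X Y t = (1 - (t - α)/(β - α)) • X + ((t - α)/(β - α)) • Y := by
  unfold seg
  rw [sub_smul, one_smul, smul_sub]
  abel

lemma seg_unit {α β t : ℝ} (hab : α < β) (h1 : α ≤ t) (h2 : t ≤ β) :
    0 ≤ (t - α)/(β - α) ∧ (t - α)/(β - α) ≤ 1 := by
  constructor
  · exact div_nonneg (by linarith) (by linarith)
  · rw [div_le_one (by linarith)]
    linarith

/-- Real-valued interpolation formula. -/
lemma seg_real {α β : ℝ} (x y t : ℝ) :
    seg α β x y t = x + ((t - α)/(β - α)) * (y - x) := by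
  simp [seg, smul_eq_mul]

lemma seg_cov {α β t : ℝ} (hab : α < β) (h1 : α ≤ t) (h2 : t ≤ β)
    (z : V) {X Y : V} {r rX rY : ℝ}
    (hX : dist z X + r ≤ rX) (hY : dist z Y + r ≤ rY) :
    dist z (seg α β X Y t) + r ≤ seg α β rX rY t := by
  obtain ⟨hu0, hu1⟩ := seg_unit hab h1 h2
  set u := (t - α)/(β - α) with hu
  have hrepr : z - ((1 - u) • X + u • Y) = (1 - u) • (z - X) + u • (z - Y) := by
    rw [smul_sub, smul_sub, sub_smul, sub_smul, one_smul, one_smul]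
    abel
  have hdist : dist z (seg α β X Y t) ≤ (1 - u) * dist z X + u * dist z Y := by
    rw [seg_repr hab, dist_eq_norm, hrepr]
    calc ‖(1-u) • (z - X) + u • (z - Y)‖ ≤ ‖(1-u) • (z-X)‖ + ‖u • (z-Y)‖ := norm_add_le _ _
      _ = (1-u) * ‖z-X‖ + u * ‖z-Y‖ := by
          rw [norm_smul, norm_smul, Real.norm_of_nonneg (by linarith), Real.norm_of_nonneg hu0]
      _ = (1-u) * dist z X + u * dist z Y := by rw [dist_eq_norm, dist_eq_norm]
  have hseg : seg α β rX rY t = (1 - u) * rX + u * rY := by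
    rw [seg_real]; ring
  rw [hseg]
  have e1 : (1-u) * (dist z X + r) ≤ (1-u) * rX :=
    mul_le_mul_of_nonneg_left hX (by linarith)
  have e2 : u * (dist z Y + r) ≤ u * rY := mul_le_mul_of_nonneg_left hY hu0
  nlinarith

lemma seg_ub {α β t x y M : ℝ} (hab : α < β) (h1 : α ≤ t) (h2 : t ≤ β)
    (hx : x ≤ M) (hy : y ≤ M) : seg α β x y t ≤ M := by
  obtain ⟨hu0, hu1⟩ := seg_unit hab h1 h2
  rw [seg_real]
  nlinarith

lemma seg_lb {α β t x y : ℝ} (hab : α < β) (h1 : α ≤ t) (h2 : t ≤ β)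
    (hx : 0 ≤ x) (hy : 0 ≤ y) : 0 ≤ seg α β x y t := by
  obtain ⟨hu0, hu1⟩ := seg_unit hab h1 h2
  rw [seg_real]
  nlinarith

/-- Piecewise trajectory: rest at `P0` until `t1`, then three affine legs, rest at `P3`
after `t4`. -/
def pwtraj (t1 t2 t3 t4 : ℝ) (P0 P1 P2 P3 : V) (t : ℝ) : V :=
  if t ≤ t1 then P0 else if t ≤ t2 then seg t1 t2 P0 P1 t
  else if t ≤ t3 then seg t2 t3 P1 P2 t
  else if t ≤ t4 then seg t3 t4 P2 P3 t else P3

variable {t1 t2 t3 t4 : ℝ}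

lemma pwtraj_continuous (h12 : t1 < t2) (h23 : t2 < t3) (h34 : t3 < t4)
    (P0 P1 P2 P3 : V) : Continuous (pwtraj t1 t2 t3 t4 P0 P1 P2 P3) := by
  unfold pwtraj
  have c4 : Continuous (fun t => if t ≤ t4 then seg t3 t4 P2 P3 t else P3) := by
    apply Continuous.if_le (seg_continuous _ _ _ _) continuous_const continuous_id
      continuous_const
    intro x hx
    rw [show x = t4 from hx, seg_right (ne_of_lt h34)]
  have c3 : Continuous (fun t => if t ≤ t3 then seg t2 t3 P1 P2 t
      else if t ≤ t4 then seg t3 t4 P2 P3 t else P3) := by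
    apply Continuous.if_le (seg_continuous _ _ _ _) c4 continuous_id continuous_const
    intro x hx
    rw [show x = t3 from hx, seg_right (ne_of_lt h23), if_pos h34.le, seg_left]
  have c2 : Continuous (fun t => if t ≤ t2 then seg t1 t2 P0 P1 t
      else if t ≤ t3 then seg t2 t3 P1 P2 t
      else if t ≤ t4 then seg t3 t4 P2 P3 t else P3) := by
    apply Continuous.if_le (seg_continuous _ _ _ _) c3 continuous_id continuous_const
    intro x hx
    rw [show x = t2 from hx, seg_right (ne_of_lt h12), if_pos h23.le, seg_left]
  apply Continuous.if_le continuous_const c2 continuous_id continuous_const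
  intro x hx
  rw [show x = t1 from hx, if_pos h12.le, seg_left]

lemma pwtraj_of_le {P0 P1 P2 P3 : V} {t : ℝ} (h : t ≤ t1) :
    pwtraj t1 t2 t3 t4 P0 P1 P2 P3 t = P0 := by
  simp [pwtraj, h]

lemma pwtraj_of_ge {P0 P1 P2 P3 : V} {t : ℝ} (h1 : t1 < t) (h2 : t2 < t) (h3 : t3 < t)
    (h4 : t4 < t) : pwtraj t1 t2 t3 t4 P0 P1 P2 P3 t = P3 := by
  simp [pwtraj, not_le.mpr h1, not_le.mpr h2, not_le.mpr h3, not_le.mpr h4]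

/-- Covering `closedBall z r` on the initial legs (up to time `t2`). -/
lemma pwtraj_cov_early (h12 : t1 < t2) (z : V) {Q0 Q1 Q2 Q3 : V} {r0 r1 r2 r3 r : ℝ}
    (h0 : dist z Q0 + r ≤ r0) (h1 : dist z Q1 + r ≤ r1) {t : ℝ} (ht : t ≤ t2) :
    dist z (pwtraj t1 t2 t3 t4 Q0 Q1 Q2 Q3 t) + r ≤ pwtraj t1 t2 t3 t4 r0 r1 r2 r3 t := by
  unfold pwtraj
  by_cases ha : t ≤ t1
  · simpa [ha] using h0
  · rw [if_neg ha, if_pos ht, if_neg ha, if_pos ht]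
    exact seg_cov h12 (not_le.mp ha).le ht z h0 h1

/-- Covering `closedBall z r` from time `t2` on. -/
lemma pwtraj_cov_late (h12 : t1 < t2) (h23 : t2 < t3) (h34 : t3 < t4) (z : V)
    {Q0 Q1 Q2 Q3 : V} {r0 r1 r2 r3 r : ℝ}
    (h1 : dist z Q1 + r ≤ r1) (h2 : dist z Q2 + r ≤ r2) (h3 : dist z Q3 + r ≤ r3)
    {t : ℝ} (ht : t2 ≤ t) :
    dist z (pwtraj t1 t2 t3 t4 Q0 Q1 Q2 Q3 t) + r ≤ pwtraj t1 t2 t3 t4 r0 r1 r2 r3 t := by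
  unfold pwtraj
  by_cases ha : t ≤ t1
  · exact absurd (ht.trans ha) (not_le.mpr h12)
  · rw [if_neg ha, if_neg ha]
    by_cases hb : t ≤ t2
    · have htt : t = t2 := le_antisymm hb ht
      rw [if_pos hb, if_pos hb, htt, seg_right (ne_of_lt h12), seg_right (ne_of_lt h12)]
      exact h1
    · rw [if_neg hb, if_neg hb]
      by_cases hc : t ≤ t3
      · rw [if_pos hc, if_pos hc]
        exact seg_cov h23 (not_le.mp hb).le hc z h1 h2
      · rw [if_neg hc, if_neg hc]
        by_cases hd : t ≤ t4
        · rw [if_pos hd, if_pos hd]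
          exact seg_cov h34 (not_le.mp hc).le hd z h2 h3
        · rw [if_neg hd, if_neg hd]
          exact h3

/-- Covering `closedBall z r` from time `t4` on, only needing the final state. -/
lemma pwtraj_cov_end (h12 : t1 < t2) (h23 : t2 < t3) (h34 : t3 < t4) (z : V)
    {Q0 Q1 Q2 Q3 : V} {r0 r1 r2 r3 r : ℝ}
    (h3 : dist z Q3 + r ≤ r3) {t : ℝ} (ht : t4 ≤ t) :
    dist z (pwtraj t1 t2 t3 t4 Q0 Q1 Q2 Q3 t) + r ≤ pwtraj t1 t2 t3 t4 r0 r1 r2 r3 t := by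
  unfold pwtraj
  have ha : ¬ t ≤ t1 := by push_neg; linarith
  have hb : ¬ t ≤ t2 := by push_neg; linarith
  have hc : ¬ t ≤ t3 := by push_neg; linarith
  rw [if_neg ha, if_neg ha, if_neg hb, if_neg hb, if_neg hc, if_neg hc]
  by_cases hd : t ≤ t4
  · have htt : t = t4 := le_antisymm hd ht
    rw [if_pos hd, if_pos hd, htt, seg_right (ne_of_lt h34), seg_right (ne_of_lt h34)]
    exact h3
  · rw [if_neg hd, if_neg hd]
    exact h3

/-- Upper bound for real piecewise trajectories. -/
lemma pwtraj_ub (h12 : t1 < t2) (h23 : t2 < t3) (h34 : t3 < t4)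
    {r0 r1 r2 r3 M : ℝ} (h0 : r0 ≤ M) (h1 : r1 ≤ M) (h2 : r2 ≤ M) (h3 : r3 ≤ M) (t : ℝ) :
    pwtraj t1 t2 t3 t4 r0 r1 r2 r3 t ≤ M := by
  unfold pwtraj
  by_cases ha : t ≤ t1
  · simpa [ha] using h0
  rw [if_neg ha]
  by_cases hb : t ≤ t2
  · rw [if_pos hb]; exact seg_ub h12 (not_le.mp ha).le hb h0 h1
  rw [if_neg hb]
  by_cases hc : t ≤ t3
  · rw [if_pos hc]; exact seg_ub h23 (not_le.mp hb).le hc h1 h2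
  rw [if_neg hc]
  by_cases hd : t ≤ t4
  · rw [if_pos hd]; exact seg_ub h34 (not_le.mp hc).le hd h2 h3
  rw [if_neg hd]; exact h3

lemma pwtraj_lb (h12 : t1 < t2) (h23 : t2 < t3) (h34 : t3 < t4)
    {r0 r1 r2 r3 : ℝ} (h0 : 0 ≤ r0) (h1 : 0 ≤ r1) (h2 : 0 ≤ r2) (h3 : 0 ≤ r3) (t : ℝ) :
    0 ≤ pwtraj t1 t2 t3 t4 r0 r1 r2 r3 t := by
  unfold pwtraj
  by_cases ha : t ≤ t1
  · simpa [ha] using h0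
  rw [if_neg ha]
  by_cases hb : t ≤ t2
  · rw [if_pos hb]; exact seg_lb h12 (not_le.mp ha).le hb h0 h1
  rw [if_neg hb]
  by_cases hc : t ≤ t3
  · rw [if_pos hc]; exact seg_lb h23 (not_le.mp hb).le hc h1 h2
  rw [if_neg hc]
  by_cases hd : t ≤ t4
  · rw [if_pos hd]; exact seg_lb h34 (not_le.mp hc).le hd h2 h3
  rw [if_neg hd]; exact h3

end


end MorphAux

theorem minsum_euclidean_morph_factor_two
    (k : ℕ) (hk : 2 ≤ k) (P : Set E) (hP : P.Finite) (C : ℝ) (hC : 0 ≤ C)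
    (c0 c1 : Fin k → E) (r0 r1 : Fin k → ℝ)
    (hr0 : ∀ i, 0 ≤ r0 i) (hr1 : ∀ i, 0 ≤ r1 i)
    (h0 : P ⊆ ⋃ i, Metric.closedBall (c0 i) (r0 i))
    (h1 : P ⊆ ⋃ i, Metric.closedBall (c1 i) (r1 i))
    (hb0 : ∑ i, r0 i ≤ C) (hb1 : ∑ i, r1 i ≤ C) :
    ∃ γ ρ, IsMorph k P c0 c1 r0 r1 γ ρ ∧
      ∀ t ∈ Set.Icc (0:ℝ) 1, ∑ i, ρ i t ≤ 2 * C := by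
  classical
  set Rel : Fin k → Fin k → Prop :=
    fun i j => ∃ p ∈ P, dist p (c0 i) ≤ r0 i ∧ dist p (c1 j) ≤ r1 j with hReldef
  obtain ⟨σ, s, e, hek, hmatch, hunmatch, harc⟩ := MorphAux.schedule_exists k Rel
  have hse : ∀ i, s i ≤ e i := by
    intro i
    by_cases h : Rel i (σ i)
    · rw [hmatch i h]
    · rw [hunmatch i h]; omega
  have hsk : ∀ i, s i ≤ k := fun i => (hse i).trans (hek i)
  set g : ℝ := 1/(2*((k:ℝ)+2)) with hgdef
  have hg : 0 < g := by rw [hgdef]; positivity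
  have hgk : (2*(k:ℝ)+4) * g = 1 := by
    rw [hgdef]
    field_simp
    ring
  set τ : ℕ → ℝ := fun n => (2*(n:ℝ) + 2) * g with hτdef
  have hτmono : ∀ {mn n : ℕ}, mn ≤ n → τ mn ≤ τ n := by
    intro mn n h
    have h' : (mn:ℝ) ≤ (n:ℝ) := Nat.cast_le.mpr h
    simp only [hτdef]
    nlinarith
  have hτlb : ∀ n, 2*g ≤ τ n := by
    intro n
    have h' : (0:ℝ) ≤ (n:ℝ) := Nat.cast_nonneg n
    simp only [hτdef]
    nlinarith
  have hτub : ∀ n, n ≤ k → τ n ≤ 1 - 2*g := by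
    intro n hn
    have h' : (n:ℝ) ≤ (k:ℝ) := Nat.cast_le.mpr hn
    simp only [hτdef]
    nlinarith
  have hτsucc : ∀ n, τ (n+1) = τ n + 2*g := by
    intro n
    simp only [hτdef]
    push_cast
    ring
  set a : Fin k → ℝ := fun i => τ (s i) with hadef
  set T1 : Fin k → ℝ := fun i => if Rel i (σ i) then a i - g else a i with hT1def
  set T2 : Fin k → ℝ := fun i => if Rel i (σ i) then a i else a i + g * (2/3) with hT2def
  set T3 : Fin k → ℝ := fun i => if Rel i (σ i) then a i + g/2 else a i + g * (4/3) with hT3def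
  set T4 : Fin k → ℝ := fun i => if Rel i (σ i) then a i + g else a i + 2*g with hT4def
  set d : Fin k → ℝ := fun i => dist (c0 i) (c1 (σ i)) with hddef
  set δ : Fin k → ℝ := fun i => min (max ((d i + r1 (σ i) - r0 i)/2) 0) (d i) with hδdef
  set X : Fin k → E := fun i => c0 i + ((δ i)/(d i)) • (c1 (σ i) - c0 i) with hXdef
  set RR : Fin k → ℝ := fun i => max (r0 i + δ i) (r1 (σ i) + (d i - δ i)) with hRRdef
  set Q1 : Fin k → E := fun i => if Rel i (σ i) then X i else c0 i with hQ1def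
  set Q2 : Fin k → E := fun i => if Rel i (σ i) then X i else c1 (σ i) with hQ2def
  set R1 : Fin k → ℝ := fun i => if Rel i (σ i) then RR i else 0 with hR1def
  set γ : Fin k → ℝ → E := fun i =>
    MorphAux.pwtraj (T1 i) (T2 i) (T3 i) (T4 i) (c0 i) (Q1 i) (Q2 i) (c1 (σ i)) with hγdef
  set ρ : Fin k → ℝ → ℝ := fun i =>
    MorphAux.pwtraj (T1 i) (T2 i) (T3 i) (T4 i) (r0 i) (R1 i) (R1 i) (r1 (σ i)) with hρdef
  clear_value g τ a T1 T2 T3 T4 d δ X RR Q1 Q2 R1 γ ρ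
  -- basic facts about δ
  have hd0 : ∀ i, 0 ≤ d i := by
    intro i; rw [hddef]; exact dist_nonneg
  have hδ0 : ∀ i, 0 ≤ δ i := by
    intro i; rw [hδdef]
    exact le_min (le_max_right _ _) (hd0 i)
  have hδd : ∀ i, δ i ≤ d i := by
    intro i; rw [hδdef]; exact min_le_right _ _
  have hRR0 : ∀ i, 0 ≤ RR i := by
    intro i; rw [hRRdef]
    exact le_trans (add_nonneg (hr0 i) (hδ0 i)) (le_max_left _ _)
  -- chain of times
  have hTchain : ∀ i, 0 < T1 i ∧ T1 i < T2 i ∧ T2 i < T3 i ∧ T3 i < T4 i ∧ T4 i < 1 := by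
    intro i
    have l1 := hτlb (s i)
    have l2 := hτub (s i) (hsk i)
    have l3 := hτub (e i) (hek i)
    have ha' : a i = τ (s i) := by rw [hadef]
    by_cases h : Rel i (σ i)
    · rw [hT1def, hT2def, hT3def, hT4def]
      simp only [if_pos h]
      refine ⟨by linarith, by linarith, by linarith, by linarith, by linarith⟩
    · have he : e i = s i + 1 := hunmatch i h
      have l4 : τ (s i + 1) ≤ 1 - 2*g := by rw [← he]; exact l3
      have l5 : τ (s i + 1) = τ (s i) + 2*g := hτsucc _
      rw [hT1def, hT2def, hT3def, hT4def]
      simp only [if_neg h]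
      refine ⟨by linarith, by linarith, by linarith, by linarith, by linarith⟩
  -- end time
  have hbτ : ∀ i, τ (e i) = if Rel i (σ i) then a i else a i + 2*g := by
    intro i
    by_cases h : Rel i (σ i)
    · rw [if_pos h, hmatch i h, hadef]
    · rw [if_neg h, hunmatch i h, hτsucc, hadef]
  -- geometry of matched disks
  have hgeom : ∀ i, Rel i (σ i) →
      (dist (c0 i) (X i) + r0 i ≤ RR i) ∧ (dist (c1 (σ i)) (X i) + r1 (σ i) ≤ RR i) ∧
      RR i ≤ r0 i + r1 (σ i) := by
    intro i h
    obtain ⟨p, hpP, hp0, hp1⟩ := h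
    have htch : d i ≤ r0 i + r1 (σ i) := by
      have htr := dist_triangle (c0 i) p (c1 (σ i))
      have h0' : dist (c0 i) p ≤ r0 i := by rw [dist_comm]; exact hp0
      rw [hddef]
      try dsimp only
      linarith
    have hAX : dist (c0 i) (X i) = δ i := by
      by_cases hd : d i = 0
      · have hδz : δ i = 0 := le_antisymm (hd ▸ hδd i) (hδ0 i)
        rw [hXdef]
        try dsimp only
        rw [hδz, zero_div, zero_smul, add_zero, dist_self]
      · rw [dist_comm, dist_eq_norm, hXdef]
        try dsimp only
        rw [add_sub_cancel_left, norm_smul]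
        rw [Real.norm_of_nonneg (div_nonneg (hδ0 i) (hd0 i))]
        have hn : ‖c1 (σ i) - c0 i‖ = d i := by
          rw [hddef]; try dsimp only; rw [dist_eq_norm, ← norm_neg]; congr 1; abel
        rw [hn, div_mul_cancel₀ _ hd]
    have hBX : dist (c1 (σ i)) (X i) = d i - δ i := by
      by_cases hd : d i = 0
      · have hδz : δ i = 0 := le_antisymm (hd ▸ hδd i) (hδ0 i)
        have hd' : dist (c1 (σ i)) (c0 i) = 0 := by
          rw [dist_comm]
          rw [hddef] at hd
          exact hd
        rw [hXdef]
        try dsimp only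
        rw [hδz, zero_div, zero_smul, add_zero, hd', hd]
        norm_num
      · rw [dist_comm, dist_eq_norm, hXdef]
        try dsimp only
        have hrw : c0 i + ((δ i)/(d i)) • (c1 (σ i) - c0 i) - c1 (σ i)
            = (1 - (δ i)/(d i)) • (c0 i - c1 (σ i)) := by
          rw [sub_smul, one_smul, smul_sub]
          module
        rw [hrw, norm_smul]
        have hu1 : (δ i)/(d i) ≤ 1 := by
          rw [div_le_one (lt_of_le_of_ne (hd0 i) (Ne.symm hd))]
          exact hδd i
        rw [Real.norm_of_nonneg (by linarith)]
        have hn : ‖c0 i - c1 (σ i)‖ = d i := by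
          rw [hddef]; try dsimp only; rw [dist_eq_norm]
        rw [hn]
        have hdpos : 0 < d i := lt_of_le_of_ne (hd0 i) (Ne.symm hd)
        field_simp
    refine ⟨?_, ?_, ?_⟩
    · rw [hAX]
      have := le_max_left (r0 i + δ i) (r1 (σ i) + (d i - δ i))
      rw [hRRdef]
      try dsimp only
      linarith
    · rw [hBX]
      have := le_max_right (r0 i + δ i) (r1 (σ i) + (d i - δ i))
      rw [hRRdef]
      try dsimp only
      linarith
    · rw [hRRdef]
      try dsimp only
      apply max_le
      · have hδr : δ i ≤ r1 (σ i) := by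
          rw [hδdef]
          try dsimp only
          refine le_trans (min_le_left _ _) (max_le (by linarith) (hr1 _))
        linarith
      · have : d i - δ i ≤ r0 i := by
          rw [hδdef]
          try dsimp only
          rcases min_cases (max ((d i + r1 (σ i) - r0 i)/2) 0) (d i) with ⟨heq, -⟩ | ⟨heq, -⟩
          · have := le_max_left ((d i + r1 (σ i) - r0 i)/2) 0
            rw [heq]
            linarith
          · rw [heq]
            linarith [hr0 i]
        linarith
  -- radius bounds
  have hρub : ∀ i t, ρ i t ≤ r0 i + r1 (σ i) := by
    intro i t
    obtain ⟨h0T, h12, h23, h34, h41⟩ := hTchain i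
    rw [hρdef]
    try dsimp only
    apply MorphAux.pwtraj_ub h12 h23 h34
    · linarith [hr1 (σ i)]
    · rw [hR1def]; try dsimp only
      by_cases h : Rel i (σ i)
      · rw [if_pos h]; exact (hgeom i h).2.2
      · rw [if_neg h]; exact add_nonneg (hr0 i) (hr1 (σ i))
    · rw [hR1def]; try dsimp only
      by_cases h : Rel i (σ i)
      · rw [if_pos h]; exact (hgeom i h).2.2
      · rw [if_neg h]; exact add_nonneg (hr0 i) (hr1 (σ i))
    · linarith [hr0 i]
  have hρlb : ∀ i t, 0 ≤ ρ i t := by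
    intro i t
    obtain ⟨h0T, h12, h23, h34, h41⟩ := hTchain i
    rw [hρdef]; try dsimp only
    refine MorphAux.pwtraj_lb h12 h23 h34 (hr0 i) ?_ ?_ (hr1 (σ i)) t
    · rw [hR1def]; try dsimp only
      by_cases h : Rel i (σ i)
      · rw [if_pos h]; exact hRR0 i
      · rw [if_neg h]
    · rw [hR1def]; try dsimp only
      by_cases h : Rel i (σ i)
      · rw [if_pos h]; exact hRR0 i
      · rw [if_neg h]
  -- covering facts
  have hcovA : ∀ i t, t ≤ a i → dist (c0 i) (γ i t) + r0 i ≤ ρ i t := by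
    intro i t ht
    obtain ⟨h0T, h12, h23, h34, h41⟩ := hTchain i
    rw [hγdef, hρdef]; try dsimp only
    by_cases h : Rel i (σ i)
    · have ht2 : t ≤ T2 i := by rw [hT2def]; try dsimp only; rw [if_pos h]; exact ht
      refine MorphAux.pwtraj_cov_early h12 (c0 i) ?_ ?_ ht2
      · rw [dist_self]; linarith
      · rw [hQ1def, hR1def]; try dsimp only; rw [if_pos h, if_pos h]
        exact (hgeom i h).1
    · have ht1 : t ≤ T1 i := by rw [hT1def]; try dsimp only; rw [if_neg h]; exact ht
      rw [MorphAux.pwtraj_of_le ht1, MorphAux.pwtraj_of_le ht1, dist_self]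
      linarith
  have hcovB : ∀ i t, τ (e i) ≤ t → dist (c1 (σ i)) (γ i t) + r1 (σ i) ≤ ρ i t := by
    intro i t ht
    obtain ⟨h0T, h12, h23, h34, h41⟩ := hTchain i
    rw [hγdef, hρdef]; try dsimp only
    by_cases h : Rel i (σ i)
    · have ht2 : T2 i ≤ t := by
        rw [hbτ i, if_pos h] at ht
        rw [hT2def]; try dsimp only; rw [if_pos h]; exact ht
      refine MorphAux.pwtraj_cov_late h12 h23 h34 (c1 (σ i)) ?_ ?_ ?_ ht2
      · rw [hQ1def, hR1def]; try dsimp only; rw [if_pos h, if_pos h]; exact (hgeom i h).2.1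
      · rw [hQ2def, hR1def]; try dsimp only; rw [if_pos h, if_pos h]; exact (hgeom i h).2.1
      · rw [dist_self]; linarith
    · have ht4 : T4 i ≤ t := by
        rw [hbτ i, if_neg h] at ht
        rw [hT4def]; try dsimp only; rw [if_neg h]; exact ht
      refine MorphAux.pwtraj_cov_end h12 h23 h34 (c1 (σ i)) ?_ ht4
      rw [dist_self]; linarith
  refine ⟨γ, ρ, ⟨?_, ?_, ?_, ?_, ?_, ⟨σ, ?_, ?_⟩, ?_⟩, ?_⟩
  · intro i
    obtain ⟨h0T, h12, h23, h34, h41⟩ := hTchain i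
    rw [hγdef]; try dsimp only
    exact (MorphAux.pwtraj_continuous h12 h23 h34 _ _ _ _).continuousOn
  · intro i
    obtain ⟨h0T, h12, h23, h34, h41⟩ := hTchain i
    rw [hρdef]; try dsimp only
    exact (MorphAux.pwtraj_continuous h12 h23 h34 _ _ _ _).continuousOn
  · intro i t _
    exact hρlb i t
  · intro i
    obtain ⟨h0T, h12, h23, h34, h41⟩ := hTchain i
    rw [hγdef]; try dsimp only
    exact MorphAux.pwtraj_of_le h0T.le
  · intro i
    obtain ⟨h0T, h12, h23, h34, h41⟩ := hTchain i
    rw [hρdef]; try dsimp only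
    exact MorphAux.pwtraj_of_le h0T.le
  · intro i
    obtain ⟨h0T, h12, h23, h34, h41⟩ := hTchain i
    rw [hγdef]; try dsimp only
    exact MorphAux.pwtraj_of_ge (by linarith) (by linarith) (by linarith) (by linarith)
  · intro i
    obtain ⟨h0T, h12, h23, h34, h41⟩ := hTchain i
    rw [hρdef]; try dsimp only
    exact MorphAux.pwtraj_of_ge (by linarith) (by linarith) (by linarith) (by linarith)
  · intro t _ p hp
    have hpi := h0 hp
    rw [Set.mem_iUnion] at hpi
    obtain ⟨i, hi⟩ := hpi
    have hpj := h1 hp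
    rw [Set.mem_iUnion] at hpj
    obtain ⟨j, hj⟩ := hpj
    rw [Metric.mem_closedBall] at hi hj
    have hRel : Rel i j := ⟨p, hp, hi, hj⟩
    have hkey : e (σ.symm j) ≤ s i := harc i j hRel
    rw [Set.mem_iUnion]
    by_cases hta : t ≤ a i
    · refine ⟨i, Metric.mem_closedBall.mpr ?_⟩
      have hA := hcovA i t hta
      have htr := dist_triangle p (c0 i) (γ i t)
      linarith
    · refine ⟨σ.symm j, Metric.mem_closedBall.mpr ?_⟩
      have hmle : τ (e (σ.symm j)) ≤ t := by
        have hmono := hτmono hkey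
        have ha' : a i = τ (s i) := by rw [hadef]
        have := le_of_not_ge hta
        linarith
      have hB := hcovB (σ.symm j) t hmle
      rw [Equiv.apply_symm_apply] at hB
      have htr := dist_triangle p (c1 j) (γ (σ.symm j) t)
      linarith
  · intro t _
    have h1' : ∑ i, ρ i t ≤ ∑ i, (r0 i + r1 (σ i)) := Finset.sum_le_sum (fun i _ => hρub i t)
    have h2' : ∑ i, (r0 i + r1 (σ i)) = ∑ i, r0 i + ∑ i, r1 (σ i) := Finset.sum_add_distrib
    have h3' : ∑ i, r1 (σ i) = ∑ i, r1 i :=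
      Fintype.sum_equiv σ (fun i => r1 (σ i)) r1 (fun i => rfl)
    linarith
end
end

section
/- Let E = EuclideanSpace ℝ (Fin 2) and P = {(0,−1), (0,0), (0,1)} ⊆ E. Let R be the configuration of 2 disks with centers (0, 1/2) and (0, −1) and radii 1/2 and 0 respectively, and let B be the configuration with centers (0, 1) and (0, −1/2) and radii 0 and 1/2 respectively; both R and B cover P with total radius 1/2. Then for every continuous morph (γ, ρ) on [0,1] from R to B covering P, there exists t ∈ [0,1] with ρ 0 t + ρ 1 t ≥ 1. (Since every 2-disk cover of P has total radius at least 1/2, this shows the topological stability ratio of the minsum Euclidean 2-center problem is at least 2; as the construction is one dimensional, the same holds in the rectilinear L∞ metric.) -/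
open Metric Set Real Pointwise

noncomputable section

lemma dist_pt (a b : ℝ) : dist (pt 0 a) (pt 0 b) = |a - b| := by
  rw [EuclideanSpace.dist_eq]
  simp [pt, Fin.sum_univ_two, Real.dist_eq, Real.sqrt_sq_eq_abs, sq_abs]

theorem minsum_euclidean_two_center_lower_bound
    (γ : Fin 2 → ℝ → E) (ρ : Fin 2 → ℝ → ℝ)
    (h : IsMorph 2 ({pt 0 (-1), pt 0 0, pt 0 1} : Set E)
      ![pt 0 (1/2), pt 0 (-1)] ![pt 0 1, pt 0 (-1/2)]
      ![1/2, 0] ![0, 1/2] γ ρ) :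
    ∃ t ∈ Set.Icc (0:ℝ) 1, (1:ℝ) ≤ ρ 0 t + ρ 1 t := by
  by_contra hcon
  push_neg at hcon
  obtain ⟨hγc, hρc, hρnn, hγinit, hρinit, ⟨σ, hγfin, hρfin⟩, hcov⟩ := h
  have htm : dist (pt 0 1) (pt 0 0) = 1 := by rw [dist_pt]; norm_num
  have htb : dist (pt 0 1) (pt 0 (-1)) = 2 := by rw [dist_pt]; norm_num
  have hmb : dist (pt 0 0) (pt 0 (-1)) = 1 := by rw [dist_pt]; norm_num
  -- coverage
  have hmem : ∀ t ∈ Set.Icc (0:ℝ) 1, ∀ p ∈ ({pt 0 (-1), pt 0 0, pt 0 1} : Set E),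
      dist p (γ 0 t) ≤ ρ 0 t ∨ dist p (γ 1 t) ≤ ρ 1 t := by
    intro t ht p hp
    have := hcov t ht hp
    simpa [Set.mem_iUnion, Metric.mem_closedBall, Fin.exists_fin_two] using this
  have hbotP : pt 0 (-1) ∈ ({pt 0 (-1), pt 0 0, pt 0 1} : Set E) := by left; rfl
  have hmidP : pt 0 0 ∈ ({pt 0 (-1), pt 0 0, pt 0 1} : Set E) := by right; left; rfl
  have htopP : pt 0 1 ∈ ({pt 0 (-1), pt 0 0, pt 0 1} : Set E) := by right; right; rfl
  -- two points in one ball bound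
  have hpair : ∀ (i : Fin 2) (t : ℝ) (p q : E), dist p (γ i t) ≤ ρ i t →
      dist q (γ i t) ≤ ρ i t → dist p q ≤ ρ i t + ρ i t := by
    intro i t p q hp hq
    calc dist p q ≤ dist p (γ i t) + dist q (γ i t) := dist_triangle_right p q (γ i t)
    _ ≤ ρ i t + ρ i t := add_le_add hp hq
  -- exactness for top
  have hexT : ∀ t ∈ Set.Icc (0:ℝ) 1,
      ¬(dist (pt 0 1) (γ 0 t) ≤ ρ 0 t ∧ dist (pt 0 1) (γ 1 t) ≤ ρ 1 t) := by
    rintro t ht ⟨h0, h1⟩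
    have hc := hcon t ht
    have hn0 := hρnn 0 t ht
    have hn1 := hρnn 1 t ht
    rcases hmem t ht (pt 0 (-1)) hbotP with hj | hj
    · have := hpair 0 t (pt 0 1) (pt 0 (-1)) h0 hj; rw [htb] at this; linarith
    · have := hpair 1 t (pt 0 1) (pt 0 (-1)) h1 hj; rw [htb] at this; linarith
  -- exactness for mid
  have hexM : ∀ t ∈ Set.Icc (0:ℝ) 1,
      ¬(dist (pt 0 0) (γ 0 t) ≤ ρ 0 t ∧ dist (pt 0 0) (γ 1 t) ≤ ρ 1 t) := by
    rintro t ht ⟨h0, h1⟩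
    have hc := hcon t ht
    have hn0 := hρnn 0 t ht
    have hn1 := hρnn 1 t ht
    rcases hmem t ht (pt 0 1) htopP with hj | hj <;>
      rcases hmem t ht (pt 0 (-1)) hbotP with hk | hk
    · have := hpair 0 t (pt 0 1) (pt 0 (-1)) hj hk; rw [htb] at this; linarith
    · have a := hpair 0 t (pt 0 1) (pt 0 0) hj h0; rw [htm] at a
      have b := hpair 1 t (pt 0 0) (pt 0 (-1)) h1 hk; rw [hmb] at b; linarith
    · have a := hpair 1 t (pt 0 1) (pt 0 0) hj h1; rw [htm] at a
      have b := hpair 0 t (pt 0 0) (pt 0 (-1)) h0 hk; rw [hmb] at b; linarith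
    · have := hpair 1 t (pt 0 1) (pt 0 (-1)) hj hk; rw [htb] at this; linarith
  -- key IVT argument
  have key : ∀ p, p ∈ ({pt 0 (-1), pt 0 0, pt 0 1} : Set E) →
      (∀ t ∈ Set.Icc (0:ℝ) 1, ¬(dist p (γ 0 t) ≤ ρ 0 t ∧ dist p (γ 1 t) ≤ ρ 1 t)) →
      (dist p (γ 0 0) - ρ 0 0) - (dist p (γ 1 0) - ρ 1 0) < 0 →
      dist p (γ 0 1) ≤ ρ 0 1 := by
    intro p hp hex h0neg
    set g : ℝ → ℝ := fun t => (dist p (γ 0 t) - ρ 0 t) - (dist p (γ 1 t) - ρ 1 t) with hg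
    have gc : ContinuousOn g (Set.Icc 0 1) := by
      apply ContinuousOn.sub
      · exact (((continuous_const.dist continuous_id).comp_continuousOn (hγc 0))).sub (hρc 0)
      · exact (((continuous_const.dist continuous_id).comp_continuousOn (hγc 1))).sub (hρc 1)
    have gne : ∀ t ∈ Set.Icc (0:ℝ) 1, g t ≠ 0 := by
      intro t ht hgt
      rw [hg] at hgt
      simp only at hgt
      rcases hmem t ht p hp with hi | hi
      · exact hex t ht ⟨hi, by linarith⟩
      · exact hex t ht ⟨by linarith, hi⟩
    have g1 : g 1 < 0 := by
      by_contra hge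
      push_neg at hge
      have h0mem : (0:ℝ) ∈ Set.Icc (g 0) (g 1) := ⟨le_of_lt h0neg, hge⟩
      obtain ⟨t, ht, hgt⟩ := intermediate_value_Icc zero_le_one gc h0mem
      exact gne t ht hgt
    rw [hg] at g1; simp only at g1
    rcases hmem 1 (by norm_num) p hp with hi | hi
    · exact hi
    · linarith
  have hT : dist (pt 0 1) (γ 0 1) ≤ ρ 0 1 := by
    apply key (pt 0 1) htopP hexT
    rw [hγinit 0, hγinit 1, hρinit 0, hρinit 1]
    simp only [Matrix.cons_val_zero, Matrix.cons_val_one, Matrix.head_cons]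
    rw [dist_pt, dist_pt]
    norm_num [abs_of_nonneg]
  have hM : dist (pt 0 0) (γ 0 1) ≤ ρ 0 1 := by
    apply key (pt 0 0) hmidP hexM
    rw [hγinit 0, hγinit 1, hρinit 0, hρinit 1]
    simp only [Matrix.cons_val_zero, Matrix.cons_val_one, Matrix.head_cons]
    rw [dist_pt, dist_pt]
    norm_num [abs_of_nonneg]
  -- final contradiction
  rcases Fin.exists_fin_two.mp ⟨σ 0, rfl⟩ with hj | hj
  · rw [hγfin 0, hρfin 0, hj] at hM
    simp only [Matrix.cons_val_zero] at hM
    rw [dist_pt] at hM; norm_num at hM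
  · rw [hγfin 0, hρfin 0, hj] at hT
    simp only [Matrix.cons_val_one, Matrix.head_cons, Matrix.cons_val_zero] at hT
    rw [dist_pt] at hT
    rw [show (1:ℝ) - (-1/2) = 3/2 by norm_num] at hT
    norm_num [abs_of_nonneg] at hT
end
end
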